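/- arXiv:2401.13007 — 3 statements merged into one kernel-verified Lean document; each statement's English description precedes it below -/
import Mathlib

section
/- If (X_1, X_2, Y_1, Y_2) has joint density f(x_1,x_2,y_1,y_2) = 1{0≤x_1≤x_2≤1}·1{1<y_1≤y_2≤2} + 1{0≤x_2<x_1≤1}·1{1<y_2<y_1≤2} + 1{1<x_1≤x_2≤2}·1{0≤y_1≤y_2≤1} + 1{1<x_2<x_1≤2}·1{0≤y_2<y_1≤1}, then P((X_1 ≤ X_2 and Y_1 ≤ Y_2) or (X_2 < X_1 and Y_2 < Y_1)) = 1, i.e., the ordinal patterns of (X_1,X_2) and (Y_1,Y_2) coincide almost surely. -/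
open MeasureTheory

noncomputable def ind (P : Prop) : ℝ := by classical exact if P then 1 else 0

noncomputable def fdens (x₁ x₂ y₁ y₂ : ℝ) : ℝ :=
  ind (0 ≤ x₁ ∧ x₁ ≤ x₂ ∧ x₂ ≤ 1) * ind (1 < y₁ ∧ y₁ ≤ y₂ ∧ y₂ ≤ 2) +
  ind (0 ≤ x₂ ∧ x₂ < x₁ ∧ x₁ ≤ 1) * ind (1 < y₂ ∧ y₂ < y₁ ∧ y₁ ≤ 2) +
  ind (1 < x₁ ∧ x₁ ≤ x₂ ∧ x₂ ≤ 2) * ind (0 ≤ y₁ ∧ y₁ ≤ y₂ ∧ y₂ ≤ 1) +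
  ind (1 < x₂ ∧ x₂ < x₁ ∧ x₁ ≤ 2) * ind (0 ≤ y₂ ∧ y₂ < y₁ ∧ y₁ ≤ 1)

lemma ind_of_not {P : Prop} (h : ¬P) : ind P = 0 := by
  simp only [ind, if_neg h]

lemma fdens_eq_zero {x₁ x₂ y₁ y₂ : ℝ}
    (h : ¬((x₁ ≤ x₂ ∧ y₁ ≤ y₂) ∨ (x₂ < x₁ ∧ y₂ < y₁))) :
    fdens x₁ x₂ y₁ y₂ = 0 := by
  push_neg at h
  obtain ⟨h1, h2⟩ := h
  have e1 : ind (0 ≤ x₁ ∧ x₁ ≤ x₂ ∧ x₂ ≤ 1) * ind (1 < y₁ ∧ y₁ ≤ y₂ ∧ y₂ ≤ 2) = 0 := by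
    by_cases ha : (0 ≤ x₁ ∧ x₁ ≤ x₂ ∧ x₂ ≤ 1)
    · have hb0 : ind (1 < y₁ ∧ y₁ ≤ y₂ ∧ y₂ ≤ 2) = 0 :=
        ind_of_not fun hb => absurd hb.2.1 (not_le.mpr (h1 ha.2.1))
      rw [hb0, mul_zero]
    · rw [ind_of_not ha, zero_mul]
  have e2 : ind (0 ≤ x₂ ∧ x₂ < x₁ ∧ x₁ ≤ 1) * ind (1 < y₂ ∧ y₂ < y₁ ∧ y₁ ≤ 2) = 0 := by
    by_cases ha : (0 ≤ x₂ ∧ x₂ < x₁ ∧ x₁ ≤ 1)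
    · have hb0 : ind (1 < y₂ ∧ y₂ < y₁ ∧ y₁ ≤ 2) = 0 :=
        ind_of_not fun hb => absurd hb.2.1 (not_lt.mpr (h2 ha.2.1))
      rw [hb0, mul_zero]
    · rw [ind_of_not ha, zero_mul]
  have e3 : ind (1 < x₁ ∧ x₁ ≤ x₂ ∧ x₂ ≤ 2) * ind (0 ≤ y₁ ∧ y₁ ≤ y₂ ∧ y₂ ≤ 1) = 0 := by
    by_cases ha : (1 < x₁ ∧ x₁ ≤ x₂ ∧ x₂ ≤ 2)
    · have hb0 : ind (0 ≤ y₁ ∧ y₁ ≤ y₂ ∧ y₂ ≤ 1) = 0 :=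
        ind_of_not fun hb => absurd hb.2.1 (not_le.mpr (h1 ha.2.1))
      rw [hb0, mul_zero]
    · rw [ind_of_not ha, zero_mul]
  have e4 : ind (1 < x₂ ∧ x₂ < x₁ ∧ x₁ ≤ 2) * ind (0 ≤ y₂ ∧ y₂ < y₁ ∧ y₁ ≤ 1) = 0 := by
    by_cases ha : (1 < x₂ ∧ x₂ < x₁ ∧ x₁ ≤ 2)
    · have hb0 : ind (0 ≤ y₂ ∧ y₂ < y₁ ∧ y₁ ≤ 1) = 0 :=
        ind_of_not fun hb => absurd hb.2.1 (not_lt.mpr (h2 ha.2.1))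
      rw [hb0, mul_zero]
    · rw [ind_of_not ha, zero_mul]
  rw [fdens, e1, e2, e3, e4]
  ring

/-- Under the density `f`, the ordinal patterns of `(X₁,X₂)` and `(Y₁,Y₂)` coincide a.s. -/
theorem coincident_patterns_prob_one {Ω : Type*} [MeasurableSpace Ω]
    (ℙ : Measure Ω) [IsProbabilityMeasure ℙ] (X₁ X₂ Y₁ Y₂ : Ω → ℝ)
    (hV : Measurable fun ω => (X₁ ω, X₂ ω, Y₁ ω, Y₂ ω))
    (hlaw : Measure.map (fun ω => (X₁ ω, X₂ ω, Y₁ ω, Y₂ ω)) ℙ =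
      volume.withDensity (fun p : ℝ × ℝ × ℝ × ℝ =>
        ENNReal.ofReal (fdens p.1 p.2.1 p.2.2.1 p.2.2.2))) :
    ℙ {ω | (X₁ ω ≤ X₂ ω ∧ Y₁ ω ≤ Y₂ ω) ∨ (X₂ ω < X₁ ω ∧ Y₂ ω < Y₁ ω)} = 1 := by
  set S : Set (ℝ × ℝ × ℝ × ℝ) :=
    {p | (p.1 ≤ p.2.1 ∧ p.2.2.1 ≤ p.2.2.2) ∨ (p.2.1 < p.1 ∧ p.2.2.2 < p.2.2.1)} with hSdef
  have hS : MeasurableSet S := by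
    apply MeasurableSet.union
    · exact (measurableSet_le measurable_fst (measurable_fst.comp measurable_snd)).inter
        (measurableSet_le ((measurable_fst.comp measurable_snd).comp measurable_snd)
          ((measurable_snd.comp measurable_snd).comp measurable_snd))
    · exact (measurableSet_lt (measurable_fst.comp measurable_snd) measurable_fst).inter
        (measurableSet_lt ((measurable_snd.comp measurable_snd).comp measurable_snd)
          ((measurable_fst.comp measurable_snd).comp measurable_snd))
  set μ := volume.withDensity (fun p : ℝ × ℝ × ℝ × ℝ =>
        ENNReal.ofReal (fdens p.1 p.2.1 p.2.2.1 p.2.2.2)) with hμ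
  have hP : ℙ {ω | (X₁ ω ≤ X₂ ω ∧ Y₁ ω ≤ Y₂ ω) ∨ (X₂ ω < X₁ ω ∧ Y₂ ω < Y₁ ω)} = μ S := by
    rw [← hlaw, Measure.map_apply hV hS]
    rfl
  have htot : μ Set.univ = 1 := by
    rw [← hlaw, Measure.map_apply hV MeasurableSet.univ]
    simp
  have hzero : ∀ p ∈ Sᶜ,
      ENNReal.ofReal (fdens p.1 p.2.1 p.2.2.1 p.2.2.2) = (0 : ENNReal) := by
    intro p hp
    simp only [hSdef, Set.mem_compl_iff, Set.mem_setOf_eq] at hp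
    rw [fdens_eq_zero hp, ENNReal.ofReal_zero]
  have hcompl : μ Sᶜ = 0 := by
    rw [hμ, withDensity_apply _ hS.compl]
    calc ∫⁻ p in Sᶜ, ENNReal.ofReal (fdens p.1 p.2.1 p.2.2.1 p.2.2.2) ∂volume
        = ∫⁻ _ in Sᶜ, (0 : ENNReal) ∂volume := by
          apply setLIntegral_congr_fun hS.compl
          exact fun p hp => hzero p hp
      _ = 0 := by simp
  rw [hP, ← htot, ← measure_add_measure_compl (μ := μ) hS, hcompl, add_zero]
end

section
/- Let (X,Y) have the density f and (X*,Y*) the density f* from the counterexample (f as in the paper, f* its modification swapping the y-blocks of the first and fourth summands). Then the joint cumulative distribution functions satisfy F_{(X,Y)}(z) ≤ F_{(X*,Y*)}(z) for all z ∈ ℝ⁴, i.e., P(X_1≤z_1, X_2≤z_2, Y_1≤z_3, Y_2≤z_4) ≤ P(X*_1≤z_1, X*_2≤z_2, Y*_1≤z_3, Y*_2≤z_4). -/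
open MeasureTheory ENNReal

noncomputable def fstar (x₁ x₂ y₁ y₂ : ℝ) : ℝ :=
  ind (0 ≤ x₁ ∧ x₁ ≤ x₂ ∧ x₂ ≤ 1) * ind (0 ≤ y₂ ∧ y₂ < y₁ ∧ y₁ ≤ 1) +
  ind (0 ≤ x₂ ∧ x₂ < x₁ ∧ x₁ ≤ 1) * ind (1 < y₂ ∧ y₂ < y₁ ∧ y₁ ≤ 2) +
  ind (1 < x₁ ∧ x₁ ≤ x₂ ∧ x₂ ≤ 2) * ind (0 ≤ y₁ ∧ y₁ ≤ y₂ ∧ y₂ ≤ 1) +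
  ind (1 < x₂ ∧ x₂ < x₁ ∧ x₁ ≤ 2) * ind (1 < y₁ ∧ y₁ ≤ y₂ ∧ y₂ ≤ 2)

/-! ### Auxiliary machinery -/

noncomputable def e (P : Prop) : ℝ≥0∞ := by classical exact if P then 1 else 0

lemma e_mul (P Q : Prop) : e P * e Q = e (P ∧ Q) := by
  by_cases hP : P <;> by_cases hQ : Q <;> simp [e, hP, hQ]

lemma e_congr {P Q : Prop} (h : P ↔ Q) : e P = e Q := by
  by_cases hP : P
  · simp [e, hP, h.1 hP]
  · have hQ : ¬ Q := fun hq => hP (h.2 hq)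
    simp [e, hP, hQ]

lemma e_false {P : Prop} (h : ¬ P) : e P = 0 := by simp [e, h]

lemma ofReal_ind_mul (P Q : Prop) : ENNReal.ofReal (ind P * ind Q) = e (P ∧ Q) := by
  by_cases hP : P <;> by_cases hQ : Q <;> simp [ind, e, hP, hQ]

lemma ind_mul_nonneg (P Q : Prop) : 0 ≤ ind P * ind Q := by
  by_cases hP : P <;> by_cases hQ : Q <;> simp [ind, hP, hQ]

lemma e_eq_indicator {α : Type*} (P : α → Prop) :
    (fun x => e (P x)) = Set.indicator {x | P x} (fun _ => (1 : ℝ≥0∞)) := by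
  funext x; by_cases h : P x <;> simp [e, h, Set.indicator, Set.mem_setOf_eq]

lemma meas_e {α : Type*} [MeasurableSpace α] {P : α → Prop}
    (h : MeasurableSet {x | P x}) : Measurable fun x => e (P x) := by
  rw [e_eq_indicator]; exact measurable_const.indicator h

lemma lint_e {α : Type*} [MeasurableSpace α] (μ : Measure α) {P : α → Prop}
    (h : MeasurableSet {x | P x}) : ∫⁻ x, e (P x) ∂μ = μ {x | P x} := by
  rw [e_eq_indicator]; exact lintegral_indicator_one h

lemma indicator_eq_mul_e {α : Type*} (S : Set α) (f : α → ℝ≥0∞) (p : α) :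
    Set.indicator S f p = f p * e (p ∈ S) := by
  by_cases h : p ∈ S <;> simp [h, e]

lemma e_prod_merge (A B R₁ R₂ R₃ R₄ : Prop) :
    e (A ∧ B) * e (R₁ ∧ R₂ ∧ R₃ ∧ R₄) = e ((A ∧ R₁ ∧ R₂) ∧ (B ∧ R₃ ∧ R₄)) := by
  rw [e_mul]; exact e_congr (by tauto)

lemma point_expand (A₁ A₂ A₃ A₄ B₁ B₂ B₃ B₄ R₁ R₂ R₃ R₄ : Prop) :
    ENNReal.ofReal (ind A₁ * ind B₁ + ind A₂ * ind B₂ + ind A₃ * ind B₃ + ind A₄ * ind B₄)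
        * e (R₁ ∧ R₂ ∧ R₃ ∧ R₄) =
      e ((A₁ ∧ R₁ ∧ R₂) ∧ (B₁ ∧ R₃ ∧ R₄)) + e ((A₂ ∧ R₁ ∧ R₂) ∧ (B₂ ∧ R₃ ∧ R₄)) +
      e ((A₃ ∧ R₁ ∧ R₂) ∧ (B₃ ∧ R₃ ∧ R₄)) + e ((A₄ ∧ R₁ ∧ R₂) ∧ (B₄ ∧ R₃ ∧ R₄)) := by
  have h1 := ind_mul_nonneg A₁ B₁
  have h2 := ind_mul_nonneg A₂ B₂
  have h3 := ind_mul_nonneg A₃ B₃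
  have h4 := ind_mul_nonneg A₄ B₄
  rw [ENNReal.ofReal_add (by linarith) h4, ENNReal.ofReal_add (by linarith) h3,
    ENNReal.ofReal_add h1 h2, ofReal_ind_mul, ofReal_ind_mul, ofReal_ind_mul, ofReal_ind_mul,
    add_mul, add_mul, add_mul, e_prod_merge, e_prod_merge, e_prod_merge, e_prod_merge]

lemma meas_single (P Q : ℝ → ℝ → Prop)
    (hP : MeasurableSet {q : ℝ × ℝ | P q.1 q.2})
    (hQ : MeasurableSet {q : ℝ × ℝ | Q q.1 q.2}) :
    Measurable fun p : ℝ × ℝ × ℝ × ℝ => e (P p.1 p.2.1 ∧ Q p.2.2.1 p.2.2.2) := by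
  have hmP : MeasurableSet {p : ℝ × ℝ × ℝ × ℝ | P p.1 p.2.1} := by
    have hm : Measurable fun p : ℝ × ℝ × ℝ × ℝ => (p.1, p.2.1) :=
      measurable_fst.prodMk (measurable_fst.comp measurable_snd)
    exact hm hP
  have hmQ : MeasurableSet {p : ℝ × ℝ × ℝ × ℝ | Q p.2.2.1 p.2.2.2} := by
    have hm : Measurable fun p : ℝ × ℝ × ℝ × ℝ => (p.2.2.1, p.2.2.2) :=
      (measurable_fst.comp (measurable_snd.comp measurable_snd)).prodMk
        (measurable_snd.comp (measurable_snd.comp measurable_snd))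
    exact hm hQ
  exact meas_e (hmP.inter hmQ)

lemma single (P Q : ℝ → ℝ → Prop)
    (hP : MeasurableSet {q : ℝ × ℝ | P q.1 q.2})
    (hQ : MeasurableSet {q : ℝ × ℝ | Q q.1 q.2}) :
    ∫⁻ p : ℝ × ℝ × ℝ × ℝ, e (P p.1 p.2.1 ∧ Q p.2.2.1 p.2.2.2) =
      volume {q : ℝ × ℝ | P q.1 q.2} * volume {q : ℝ × ℝ | Q q.1 q.2} := by
  have hg := meas_single P Q hP hQ
  have hφ := MeasureTheory.volume_preserving_prodAssoc (α₁ := ℝ) (β₁ := ℝ) (γ₁ := ℝ × ℝ)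
  rw [← hφ.lintegral_comp hg]
  have heq : (fun q : (ℝ × ℝ) × ℝ × ℝ =>
      e (P (MeasurableEquiv.prodAssoc q).1 (MeasurableEquiv.prodAssoc q).2.1 ∧
        Q (MeasurableEquiv.prodAssoc q).2.2.1 (MeasurableEquiv.prodAssoc q).2.2.2))
      = fun q => (fun r : ℝ × ℝ => e (P r.1 r.2)) q.1 * (fun r : ℝ × ℝ => e (Q r.1 r.2)) q.2 := by
    funext q
    simp only [MeasurableEquiv.prodAssoc, Equiv.prodAssoc, Equiv.coe_fn_mk,
      MeasurableEquiv.coe_mk]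
    rw [e_mul]
  rw [heq, MeasureTheory.Measure.volume_eq_prod,
    lintegral_prod_mul (meas_e hP).aemeasurable (meas_e hQ).aemeasurable,
    lint_e _ hP, lint_e _ hQ]

/-! ### Measurability of the four triangles -/

lemma mTup : MeasurableSet {q : ℝ × ℝ | 0 ≤ q.1 ∧ q.1 ≤ q.2 ∧ q.2 ≤ 1} :=
  (measurableSet_le measurable_const measurable_fst).inter
    ((measurableSet_le measurable_fst measurable_snd).inter
      (measurableSet_le measurable_snd measurable_const))

lemma mTlo : MeasurableSet {q : ℝ × ℝ | 0 ≤ q.2 ∧ q.2 < q.1 ∧ q.1 ≤ 1} :=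
  (measurableSet_le measurable_const measurable_snd).inter
    ((measurableSet_lt measurable_snd measurable_fst).inter
      (measurableSet_le measurable_fst measurable_const))

lemma mTup2 : MeasurableSet {q : ℝ × ℝ | 1 < q.1 ∧ q.1 ≤ q.2 ∧ q.2 ≤ 2} :=
  (measurableSet_lt measurable_const measurable_fst).inter
    ((measurableSet_le measurable_fst measurable_snd).inter
      (measurableSet_le measurable_snd measurable_const))

lemma mTlo2 : MeasurableSet {q : ℝ × ℝ | 1 < q.2 ∧ q.2 < q.1 ∧ q.1 ≤ 2} :=
  (measurableSet_lt measurable_const measurable_snd).inter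
    ((measurableSet_lt measurable_snd measurable_fst).inter
      (measurableSet_le measurable_fst measurable_const))

lemma measQuad {P : ℝ → ℝ → Prop} (h : MeasurableSet {q : ℝ × ℝ | P q.1 q.2}) (w₁ w₂ : ℝ) :
    MeasurableSet {q : ℝ × ℝ | P q.1 q.2 ∧ q.1 ≤ w₁ ∧ q.2 ≤ w₂} :=
  h.inter ((measurableSet_le measurable_fst measurable_const).inter
    (measurableSet_le measurable_snd measurable_const))

/-! ### Triangle areas -/

lemma ofReal_half : ENNReal.ofReal ((1 : ℝ)/2) = 1/2 := by
  rw [ENNReal.ofReal_div_of_pos (by norm_num)]; norm_num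

lemma lint_aux {a b : ℝ} (hab : a ≤ b) (f : ℝ → ℝ) (hf : Continuous f)
    (hnn : ∀ x ∈ Set.Icc a b, 0 ≤ f x) :
    ∫⁻ x in Set.Icc a b, ENNReal.ofReal (f x) = ENNReal.ofReal (∫ x in a..b, f x) := by
  rw [← ofReal_integral_eq_lintegral_ofReal hf.integrableOn_Icc
    ((ae_restrict_iff' measurableSet_Icc).2 (Filter.Eventually.of_forall hnn))]
  rw [MeasureTheory.integral_Icc_eq_integral_Ioc, ← intervalIntegral.integral_of_le hab]

lemma int_one_sub : ∫⁻ x in Set.Icc (0:ℝ) 1, ENNReal.ofReal (1 - x) = 1/2 := by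
  rw [lint_aux (by norm_num) _ (by continuity) (fun x hx => by simp at hx; linarith [hx.2])]
  rw [intervalIntegral.integral_sub intervalIntegrable_const intervalIntegral.intervalIntegrable_id]
  rw [intervalIntegral.integral_const, integral_id]
  norm_num [ofReal_half]

lemma int_id : ∫⁻ x in Set.Icc (0:ℝ) 1, ENNReal.ofReal x = 1/2 := by
  rw [lint_aux (by norm_num) _ (by continuity) (fun x hx => by simp at hx; linarith [hx.1])]
  rw [integral_id]; norm_num [ofReal_half]

lemma int_sub_one : ∫⁻ x in Set.Icc (1:ℝ) 2, ENNReal.ofReal (x - 1) = 1/2 := by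
  rw [lint_aux (by norm_num) _ (by continuity) (fun x hx => by simp at hx; linarith [hx.1])]
  rw [intervalIntegral.integral_sub intervalIntegral.intervalIntegrable_id intervalIntegrable_const]
  rw [intervalIntegral.integral_const, integral_id]
  norm_num [ofReal_half]

lemma int_two_sub : ∫⁻ x in Set.Ioc (1:ℝ) 2, ENNReal.ofReal (2 - x) = 1/2 := by
  rw [Measure.restrict_congr_set MeasureTheory.Ioc_ae_eq_Icc]
  rw [lint_aux (by norm_num) _ (by continuity) (fun x hx => by simp at hx; linarith [hx.2])]
  rw [intervalIntegral.integral_sub intervalIntegrable_const intervalIntegral.intervalIntegrable_id]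
  rw [intervalIntegral.integral_const, integral_id]
  norm_num [ofReal_half]

lemma vol_Tup : volume {q : ℝ × ℝ | 0 ≤ q.1 ∧ q.1 ≤ q.2 ∧ q.2 ≤ 1} = 1/2 := by
  rw [MeasureTheory.Measure.volume_eq_prod, Measure.prod_apply mTup]
  have h : (fun a => (volume : Measure ℝ)
        (Prod.mk a ⁻¹' {q : ℝ × ℝ | 0 ≤ q.1 ∧ q.1 ≤ q.2 ∧ q.2 ≤ 1}))
      = Set.indicator (Set.Icc (0:ℝ) 1) (fun a => ENNReal.ofReal (1 - a)) := by
    funext a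
    by_cases h0 : 0 ≤ a
    · have hpre : Prod.mk a ⁻¹' {q : ℝ × ℝ | 0 ≤ q.1 ∧ q.1 ≤ q.2 ∧ q.2 ≤ 1}
          = Set.Icc a 1 := by
        ext b; simp [Set.mem_Icc, h0]
      rw [hpre, Real.volume_Icc]
      by_cases h1 : a ≤ 1
      · rw [Set.indicator_of_mem (Set.mem_Icc.2 ⟨h0, h1⟩)]
      · rw [Set.indicator_of_notMem (fun hm => h1 (Set.mem_Icc.1 hm).2),
          ENNReal.ofReal_eq_zero]
        linarith
    · have hpre : Prod.mk a ⁻¹' {q : ℝ × ℝ | 0 ≤ q.1 ∧ q.1 ≤ q.2 ∧ q.2 ≤ 1}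
          = (∅ : Set ℝ) := by
        ext b; simp only [Set.mem_preimage, Set.mem_setOf_eq, Set.mem_empty_iff_false,
          iff_false]
        intro hb; exact h0 hb.1
      rw [hpre, Set.indicator_of_notMem (fun hm => h0 (Set.mem_Icc.1 hm).1)]
      simp
  rw [h, lintegral_indicator measurableSet_Icc, int_one_sub]

lemma vol_Tlo : volume {q : ℝ × ℝ | 0 ≤ q.2 ∧ q.2 < q.1 ∧ q.1 ≤ 1} = 1/2 := by
  rw [MeasureTheory.Measure.volume_eq_prod, Measure.prod_apply mTlo]
  have h : (fun a => (volume : Measure ℝ)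
        (Prod.mk a ⁻¹' {q : ℝ × ℝ | 0 ≤ q.2 ∧ q.2 < q.1 ∧ q.1 ≤ 1}))
      = Set.indicator (Set.Icc (0:ℝ) 1) (fun a => ENNReal.ofReal a) := by
    funext a
    by_cases h1 : a ≤ 1
    · have hpre : Prod.mk a ⁻¹' {q : ℝ × ℝ | 0 ≤ q.2 ∧ q.2 < q.1 ∧ q.1 ≤ 1}
          = Set.Ico 0 a := by
        ext b; simp [Set.mem_Ico, h1, and_comm]
      rw [hpre, Real.volume_Ico, sub_zero]
      by_cases h0 : 0 ≤ a
      · rw [Set.indicator_of_mem (Set.mem_Icc.2 ⟨h0, h1⟩)]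
      · rw [Set.indicator_of_notMem (fun hm => h0 (Set.mem_Icc.1 hm).1)]
        rw [ENNReal.ofReal_eq_zero]; linarith
    · have hpre : Prod.mk a ⁻¹' {q : ℝ × ℝ | 0 ≤ q.2 ∧ q.2 < q.1 ∧ q.1 ≤ 1}
          = (∅ : Set ℝ) := by
        ext b; simp only [Set.mem_preimage, Set.mem_setOf_eq, Set.mem_empty_iff_false,
          iff_false]
        intro hb; exact h1 hb.2.2
      rw [hpre, Set.indicator_of_notMem (fun hm => h1 (Set.mem_Icc.1 hm).2)]
      simp
  rw [h, lintegral_indicator measurableSet_Icc, int_id]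

lemma vol_Tlo2 : volume {q : ℝ × ℝ | 1 < q.2 ∧ q.2 < q.1 ∧ q.1 ≤ 2} = 1/2 := by
  rw [MeasureTheory.Measure.volume_eq_prod, Measure.prod_apply mTlo2]
  have h : (fun a => (volume : Measure ℝ)
        (Prod.mk a ⁻¹' {q : ℝ × ℝ | 1 < q.2 ∧ q.2 < q.1 ∧ q.1 ≤ 2}))
      = Set.indicator (Set.Icc (1:ℝ) 2) (fun a => ENNReal.ofReal (a - 1)) := by
    funext a
    by_cases h2 : a ≤ 2
    · have hpre : Prod.mk a ⁻¹' {q : ℝ × ℝ | 1 < q.2 ∧ q.2 < q.1 ∧ q.1 ≤ 2}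
          = Set.Ioo 1 a := by
        ext b; simp [Set.mem_Ioo, h2, and_comm]
      rw [hpre, Real.volume_Ioo]
      by_cases h1 : 1 ≤ a
      · rw [Set.indicator_of_mem (Set.mem_Icc.2 ⟨h1, h2⟩)]
      · rw [Set.indicator_of_notMem (fun hm => h1 (Set.mem_Icc.1 hm).1)]
        rw [ENNReal.ofReal_eq_zero]; linarith
    · have hpre : Prod.mk a ⁻¹' {q : ℝ × ℝ | 1 < q.2 ∧ q.2 < q.1 ∧ q.1 ≤ 2}
          = (∅ : Set ℝ) := by
        ext b; simp only [Set.mem_preimage, Set.mem_setOf_eq, Set.mem_empty_iff_false,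
          iff_false]
        intro hb; exact h2 hb.2.2
      rw [hpre, Set.indicator_of_notMem (fun hm => h2 (Set.mem_Icc.1 hm).2)]
      simp
  rw [h, lintegral_indicator measurableSet_Icc, int_sub_one]

lemma vol_Tup2 : volume {q : ℝ × ℝ | 1 < q.1 ∧ q.1 ≤ q.2 ∧ q.2 ≤ 2} = 1/2 := by
  rw [MeasureTheory.Measure.volume_eq_prod, Measure.prod_apply mTup2]
  have h : (fun a => (volume : Measure ℝ)
        (Prod.mk a ⁻¹' {q : ℝ × ℝ | 1 < q.1 ∧ q.1 ≤ q.2 ∧ q.2 ≤ 2}))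
      = Set.indicator (Set.Ioc (1:ℝ) 2) (fun a => ENNReal.ofReal (2 - a)) := by
    funext a
    by_cases h1 : 1 < a
    · have hpre : Prod.mk a ⁻¹' {q : ℝ × ℝ | 1 < q.1 ∧ q.1 ≤ q.2 ∧ q.2 ≤ 2}
          = Set.Icc a 2 := by
        ext b; simp [Set.mem_Icc, h1]
      rw [hpre, Real.volume_Icc]
      by_cases h2 : a ≤ 2
      · rw [Set.indicator_of_mem (Set.mem_Ioc.2 ⟨h1, h2⟩)]
      · rw [Set.indicator_of_notMem (fun hm => h2 (Set.mem_Ioc.1 hm).2),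
          ENNReal.ofReal_eq_zero]
        linarith
    · have hpre : Prod.mk a ⁻¹' {q : ℝ × ℝ | 1 < q.1 ∧ q.1 ≤ q.2 ∧ q.2 ≤ 2}
          = (∅ : Set ℝ) := by
        ext b; simp only [Set.mem_preimage, Set.mem_setOf_eq, Set.mem_empty_iff_false,
          iff_false]
        intro hb; exact h1 hb.1
      rw [hpre, Set.indicator_of_notMem (fun hm => h1 (Set.mem_Ioc.1 hm).1)]
      simp
  rw [h, lintegral_indicator measurableSet_Ioc, int_two_sub]

/-! ### Evaluation of the cdf of a density built from four product blocks -/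

noncomputable def term (P Q : ℝ → ℝ → Prop) (z₁ z₂ z₃ z₄ : ℝ) (p : ℝ × ℝ × ℝ × ℝ) : ℝ≥0∞ :=
  e ((P p.1 p.2.1 ∧ p.1 ≤ z₁ ∧ p.2.1 ≤ z₂) ∧
     (Q p.2.2.1 p.2.2.2 ∧ p.2.2.1 ≤ z₃ ∧ p.2.2.2 ≤ z₄))

lemma meas_term (P Q : ℝ → ℝ → Prop) (z₁ z₂ z₃ z₄ : ℝ)
    (hP : MeasurableSet {q : ℝ × ℝ | P q.1 q.2})
    (hQ : MeasurableSet {q : ℝ × ℝ | Q q.1 q.2}) :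
    Measurable (term P Q z₁ z₂ z₃ z₄) :=
  meas_single (fun a b => P a b ∧ a ≤ z₁ ∧ b ≤ z₂) (fun c d => Q c d ∧ c ≤ z₃ ∧ d ≤ z₄)
    (measQuad hP z₁ z₂) (measQuad hQ z₃ z₄)

lemma lint_term (P Q : ℝ → ℝ → Prop) (z₁ z₂ z₃ z₄ : ℝ)
    (hP : MeasurableSet {q : ℝ × ℝ | P q.1 q.2})
    (hQ : MeasurableSet {q : ℝ × ℝ | Q q.1 q.2}) :
    ∫⁻ p : ℝ × ℝ × ℝ × ℝ, term P Q z₁ z₂ z₃ z₄ p =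
      volume {q : ℝ × ℝ | P q.1 q.2 ∧ q.1 ≤ z₁ ∧ q.2 ≤ z₂} *
        volume {q : ℝ × ℝ | Q q.1 q.2 ∧ q.1 ≤ z₃ ∧ q.2 ≤ z₄} :=
  single (fun a b => P a b ∧ a ≤ z₁ ∧ b ≤ z₂) (fun c d => Q c d ∧ c ≤ z₃ ∧ d ≤ z₄)
    (measQuad hP z₁ z₂) (measQuad hQ z₃ z₄)

lemma cdf_eval (Q₁ Q₂ Q₃ Q₄ : ℝ → ℝ → Prop)
    (m₁ : MeasurableSet {q : ℝ × ℝ | Q₁ q.1 q.2})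
    (m₂ : MeasurableSet {q : ℝ × ℝ | Q₂ q.1 q.2})
    (m₃ : MeasurableSet {q : ℝ × ℝ | Q₃ q.1 q.2})
    (m₄ : MeasurableSet {q : ℝ × ℝ | Q₄ q.1 q.2})
    (z₁ z₂ z₃ z₄ : ℝ)
    (hS : MeasurableSet {p : ℝ × ℝ × ℝ × ℝ |
      p.1 ≤ z₁ ∧ p.2.1 ≤ z₂ ∧ p.2.2.1 ≤ z₃ ∧ p.2.2.2 ≤ z₄}) :
    ∫⁻ p : ℝ × ℝ × ℝ × ℝ in
        {p : ℝ × ℝ × ℝ × ℝ | p.1 ≤ z₁ ∧ p.2.1 ≤ z₂ ∧ p.2.2.1 ≤ z₃ ∧ p.2.2.2 ≤ z₄},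
      ENNReal.ofReal (
        ind (0 ≤ p.1 ∧ p.1 ≤ p.2.1 ∧ p.2.1 ≤ 1) * ind (Q₁ p.2.2.1 p.2.2.2) +
        ind (0 ≤ p.2.1 ∧ p.2.1 < p.1 ∧ p.1 ≤ 1) * ind (Q₂ p.2.2.1 p.2.2.2) +
        ind (1 < p.1 ∧ p.1 ≤ p.2.1 ∧ p.2.1 ≤ 2) * ind (Q₃ p.2.2.1 p.2.2.2) +
        ind (1 < p.2.1 ∧ p.2.1 < p.1 ∧ p.1 ≤ 2) * ind (Q₄ p.2.2.1 p.2.2.2)) =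
      volume {q : ℝ × ℝ | (0 ≤ q.1 ∧ q.1 ≤ q.2 ∧ q.2 ≤ 1) ∧ q.1 ≤ z₁ ∧ q.2 ≤ z₂} *
        volume {q : ℝ × ℝ | Q₁ q.1 q.2 ∧ q.1 ≤ z₃ ∧ q.2 ≤ z₄} +
      volume {q : ℝ × ℝ | (0 ≤ q.2 ∧ q.2 < q.1 ∧ q.1 ≤ 1) ∧ q.1 ≤ z₁ ∧ q.2 ≤ z₂} *
        volume {q : ℝ × ℝ | Q₂ q.1 q.2 ∧ q.1 ≤ z₃ ∧ q.2 ≤ z₄} +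
      volume {q : ℝ × ℝ | (1 < q.1 ∧ q.1 ≤ q.2 ∧ q.2 ≤ 2) ∧ q.1 ≤ z₁ ∧ q.2 ≤ z₂} *
        volume {q : ℝ × ℝ | Q₃ q.1 q.2 ∧ q.1 ≤ z₃ ∧ q.2 ≤ z₄} +
      volume {q : ℝ × ℝ | (1 < q.2 ∧ q.2 < q.1 ∧ q.1 ≤ 2) ∧ q.1 ≤ z₁ ∧ q.2 ≤ z₂} *
        volume {q : ℝ × ℝ | Q₄ q.1 q.2 ∧ q.1 ≤ z₃ ∧ q.2 ≤ z₄} := by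
  rw [← lintegral_indicator hS]
  have hpoint : ∀ p : ℝ × ℝ × ℝ × ℝ,
      Set.indicator {p : ℝ × ℝ × ℝ × ℝ | p.1 ≤ z₁ ∧ p.2.1 ≤ z₂ ∧ p.2.2.1 ≤ z₃ ∧ p.2.2.2 ≤ z₄}
        (fun p => ENNReal.ofReal (
          ind (0 ≤ p.1 ∧ p.1 ≤ p.2.1 ∧ p.2.1 ≤ 1) * ind (Q₁ p.2.2.1 p.2.2.2) +
          ind (0 ≤ p.2.1 ∧ p.2.1 < p.1 ∧ p.1 ≤ 1) * ind (Q₂ p.2.2.1 p.2.2.2) +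
          ind (1 < p.1 ∧ p.1 ≤ p.2.1 ∧ p.2.1 ≤ 2) * ind (Q₃ p.2.2.1 p.2.2.2) +
          ind (1 < p.2.1 ∧ p.2.1 < p.1 ∧ p.1 ≤ 2) * ind (Q₄ p.2.2.1 p.2.2.2))) p
      = term (fun a b => 0 ≤ a ∧ a ≤ b ∧ b ≤ 1) Q₁ z₁ z₂ z₃ z₄ p +
        term (fun a b => 0 ≤ b ∧ b < a ∧ a ≤ 1) Q₂ z₁ z₂ z₃ z₄ p +
        term (fun a b => 1 < a ∧ a ≤ b ∧ b ≤ 2) Q₃ z₁ z₂ z₃ z₄ p +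
        term (fun a b => 1 < b ∧ b < a ∧ a ≤ 2) Q₄ z₁ z₂ z₃ z₄ p := by
    intro p
    rw [indicator_eq_mul_e]
    exact point_expand _ _ _ _ _ _ _ _ _ _ _ _
  rw [lintegral_congr hpoint]
  have hm1 := meas_term (fun a b => 0 ≤ a ∧ a ≤ b ∧ b ≤ 1) Q₁ z₁ z₂ z₃ z₄ mTup m₁
  have hm2 := meas_term (fun a b => 0 ≤ b ∧ b < a ∧ a ≤ 1) Q₂ z₁ z₂ z₃ z₄ mTlo m₂
  have hm3 := meas_term (fun a b => 1 < a ∧ a ≤ b ∧ b ≤ 2) Q₃ z₁ z₂ z₃ z₄ mTup2 m₃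
  rw [lintegral_add_left (f := fun p => term (fun a b => 0 ≤ a ∧ a ≤ b ∧ b ≤ 1) Q₁ z₁ z₂ z₃ z₄ p + term (fun a b => 0 ≤ b ∧ b < a ∧ a ≤ 1) Q₂ z₁ z₂ z₃ z₄ p + term (fun a b => 1 < a ∧ a ≤ b ∧ b ≤ 2) Q₃ z₁ z₂ z₃ z₄ p) ((hm1.add hm2).add hm3),
    lintegral_add_left (f := fun p => term (fun a b => 0 ≤ a ∧ a ≤ b ∧ b ≤ 1) Q₁ z₁ z₂ z₃ z₄ p + term (fun a b => 0 ≤ b ∧ b < a ∧ a ≤ 1) Q₂ z₁ z₂ z₃ z₄ p) (hm1.add hm2),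
    lintegral_add_left hm1]
  rw [lint_term _ _ _ _ _ _ mTup m₁, lint_term _ _ _ _ _ _ mTlo m₂,
    lint_term _ _ _ _ _ _ mTup2 m₃, lint_term _ _ _ _ _ _ mTlo2 m₄]

lemma cdf_eval_f (z₁ z₂ z₃ z₄ : ℝ)
    (hS : MeasurableSet {p : ℝ × ℝ × ℝ × ℝ |
      p.1 ≤ z₁ ∧ p.2.1 ≤ z₂ ∧ p.2.2.1 ≤ z₃ ∧ p.2.2.2 ≤ z₄}) :
    ∫⁻ p : ℝ × ℝ × ℝ × ℝ in
        {p : ℝ × ℝ × ℝ × ℝ | p.1 ≤ z₁ ∧ p.2.1 ≤ z₂ ∧ p.2.2.1 ≤ z₃ ∧ p.2.2.2 ≤ z₄},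
      ENNReal.ofReal (
        ind (0 ≤ p.1 ∧ p.1 ≤ p.2.1 ∧ p.2.1 ≤ 1) *
          ind (1 < p.2.2.1 ∧ p.2.2.1 ≤ p.2.2.2 ∧ p.2.2.2 ≤ 2) +
        ind (0 ≤ p.2.1 ∧ p.2.1 < p.1 ∧ p.1 ≤ 1) *
          ind (1 < p.2.2.2 ∧ p.2.2.2 < p.2.2.1 ∧ p.2.2.1 ≤ 2) +
        ind (1 < p.1 ∧ p.1 ≤ p.2.1 ∧ p.2.1 ≤ 2) *
          ind (0 ≤ p.2.2.1 ∧ p.2.2.1 ≤ p.2.2.2 ∧ p.2.2.2 ≤ 1) +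
        ind (1 < p.2.1 ∧ p.2.1 < p.1 ∧ p.1 ≤ 2) *
          ind (0 ≤ p.2.2.2 ∧ p.2.2.2 < p.2.2.1 ∧ p.2.2.1 ≤ 1)) =
      volume {q : ℝ × ℝ | (0 ≤ q.1 ∧ q.1 ≤ q.2 ∧ q.2 ≤ 1) ∧ q.1 ≤ z₁ ∧ q.2 ≤ z₂} *
        volume {q : ℝ × ℝ | (1 < q.1 ∧ q.1 ≤ q.2 ∧ q.2 ≤ 2) ∧ q.1 ≤ z₃ ∧ q.2 ≤ z₄} +
      volume {q : ℝ × ℝ | (0 ≤ q.2 ∧ q.2 < q.1 ∧ q.1 ≤ 1) ∧ q.1 ≤ z₁ ∧ q.2 ≤ z₂} *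
        volume {q : ℝ × ℝ | (1 < q.2 ∧ q.2 < q.1 ∧ q.1 ≤ 2) ∧ q.1 ≤ z₃ ∧ q.2 ≤ z₄} +
      volume {q : ℝ × ℝ | (1 < q.1 ∧ q.1 ≤ q.2 ∧ q.2 ≤ 2) ∧ q.1 ≤ z₁ ∧ q.2 ≤ z₂} *
        volume {q : ℝ × ℝ | (0 ≤ q.1 ∧ q.1 ≤ q.2 ∧ q.2 ≤ 1) ∧ q.1 ≤ z₃ ∧ q.2 ≤ z₄} +
      volume {q : ℝ × ℝ | (1 < q.2 ∧ q.2 < q.1 ∧ q.1 ≤ 2) ∧ q.1 ≤ z₁ ∧ q.2 ≤ z₂} *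
        volume {q : ℝ × ℝ | (0 ≤ q.2 ∧ q.2 < q.1 ∧ q.1 ≤ 1) ∧ q.1 ≤ z₃ ∧ q.2 ≤ z₄} :=
  cdf_eval (fun c d => 1 < c ∧ c ≤ d ∧ d ≤ 2) (fun c d => 1 < d ∧ d < c ∧ c ≤ 2)
    (fun c d => 0 ≤ c ∧ c ≤ d ∧ d ≤ 1) (fun c d => 0 ≤ d ∧ d < c ∧ c ≤ 1)
    mTup2 mTlo2 mTup mTlo z₁ z₂ z₃ z₄ hS

lemma cdf_eval_fstar (z₁ z₂ z₃ z₄ : ℝ)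
    (hS : MeasurableSet {p : ℝ × ℝ × ℝ × ℝ |
      p.1 ≤ z₁ ∧ p.2.1 ≤ z₂ ∧ p.2.2.1 ≤ z₃ ∧ p.2.2.2 ≤ z₄}) :
    ∫⁻ p : ℝ × ℝ × ℝ × ℝ in
        {p : ℝ × ℝ × ℝ × ℝ | p.1 ≤ z₁ ∧ p.2.1 ≤ z₂ ∧ p.2.2.1 ≤ z₃ ∧ p.2.2.2 ≤ z₄},
      ENNReal.ofReal (
        ind (0 ≤ p.1 ∧ p.1 ≤ p.2.1 ∧ p.2.1 ≤ 1) *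
          ind (0 ≤ p.2.2.2 ∧ p.2.2.2 < p.2.2.1 ∧ p.2.2.1 ≤ 1) +
        ind (0 ≤ p.2.1 ∧ p.2.1 < p.1 ∧ p.1 ≤ 1) *
          ind (1 < p.2.2.2 ∧ p.2.2.2 < p.2.2.1 ∧ p.2.2.1 ≤ 2) +
        ind (1 < p.1 ∧ p.1 ≤ p.2.1 ∧ p.2.1 ≤ 2) *
          ind (0 ≤ p.2.2.1 ∧ p.2.2.1 ≤ p.2.2.2 ∧ p.2.2.2 ≤ 1) +
        ind (1 < p.2.1 ∧ p.2.1 < p.1 ∧ p.1 ≤ 2) *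
          ind (1 < p.2.2.1 ∧ p.2.2.1 ≤ p.2.2.2 ∧ p.2.2.2 ≤ 2)) =
      volume {q : ℝ × ℝ | (0 ≤ q.1 ∧ q.1 ≤ q.2 ∧ q.2 ≤ 1) ∧ q.1 ≤ z₁ ∧ q.2 ≤ z₂} *
        volume {q : ℝ × ℝ | (0 ≤ q.2 ∧ q.2 < q.1 ∧ q.1 ≤ 1) ∧ q.1 ≤ z₃ ∧ q.2 ≤ z₄} +
      volume {q : ℝ × ℝ | (0 ≤ q.2 ∧ q.2 < q.1 ∧ q.1 ≤ 1) ∧ q.1 ≤ z₁ ∧ q.2 ≤ z₂} *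
        volume {q : ℝ × ℝ | (1 < q.2 ∧ q.2 < q.1 ∧ q.1 ≤ 2) ∧ q.1 ≤ z₃ ∧ q.2 ≤ z₄} +
      volume {q : ℝ × ℝ | (1 < q.1 ∧ q.1 ≤ q.2 ∧ q.2 ≤ 2) ∧ q.1 ≤ z₁ ∧ q.2 ≤ z₂} *
        volume {q : ℝ × ℝ | (0 ≤ q.1 ∧ q.1 ≤ q.2 ∧ q.2 ≤ 1) ∧ q.1 ≤ z₃ ∧ q.2 ≤ z₄} +
      volume {q : ℝ × ℝ | (1 < q.2 ∧ q.2 < q.1 ∧ q.1 ≤ 2) ∧ q.1 ≤ z₁ ∧ q.2 ≤ z₂} *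
        volume {q : ℝ × ℝ | (1 < q.1 ∧ q.1 ≤ q.2 ∧ q.2 ≤ 2) ∧ q.1 ≤ z₃ ∧ q.2 ≤ z₄} :=
  cdf_eval (fun c d => 0 ≤ d ∧ d < c ∧ c ≤ 1) (fun c d => 1 < d ∧ d < c ∧ c ≤ 2)
    (fun c d => 0 ≤ c ∧ c ≤ d ∧ d ≤ 1) (fun c d => 1 < c ∧ c ≤ d ∧ d ≤ 2)
    mTlo mTlo2 mTup mTup2 z₁ z₂ z₃ z₄ hS

lemma rearrange (a1 a2 a3 a4 b1 b2 b3 b4 : ℝ≥0∞) (hA : a4 ≤ a1) (hB : b1 ≤ b4) :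
    a1 * b1 + a2 * b2 + a3 * b3 + a4 * b4 ≤ a1 * b4 + a2 * b2 + a3 * b3 + a4 * b1 := by
  obtain ⟨t, ht⟩ := exists_add_of_le hA
  obtain ⟨s, hs⟩ := exists_add_of_le hB
  subst ht hs
  have h : (a4 + t) * (b1 + s) + a2 * b2 + a3 * b3 + a4 * b1
      = ((a4 + t) * b1 + a2 * b2 + a3 * b3 + a4 * (b1 + s)) + t * s := by ring
  rw [h]
  exact le_self_add

/-! ### The main theorem -/

/-- The joint cdf of a vector with density `f` is pointwise dominated by that of a vector
with density `f*`. -/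
theorem cdf_le_cdf_star {Ω : Type*} [MeasurableSpace Ω]
    (ℙ : Measure Ω) [IsProbabilityMeasure ℙ]
    (X₁ X₂ Y₁ Y₂ Xs₁ Xs₂ Ys₁ Ys₂ : Ω → ℝ)
    (hV : Measurable fun ω => (X₁ ω, X₂ ω, Y₁ ω, Y₂ ω))
    (hW : Measurable fun ω => (Xs₁ ω, Xs₂ ω, Ys₁ ω, Ys₂ ω))
    (hlaw : Measure.map (fun ω => (X₁ ω, X₂ ω, Y₁ ω, Y₂ ω)) ℙ =
      volume.withDensity (fun p : ℝ × ℝ × ℝ × ℝ =>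
        ENNReal.ofReal (fdens p.1 p.2.1 p.2.2.1 p.2.2.2)))
    (hlaws : Measure.map (fun ω => (Xs₁ ω, Xs₂ ω, Ys₁ ω, Ys₂ ω)) ℙ =
      volume.withDensity (fun p : ℝ × ℝ × ℝ × ℝ =>
        ENNReal.ofReal (fstar p.1 p.2.1 p.2.2.1 p.2.2.2))) :
    ∀ z₁ z₂ z₃ z₄ : ℝ,
      ℙ {ω | X₁ ω ≤ z₁ ∧ X₂ ω ≤ z₂ ∧ Y₁ ω ≤ z₃ ∧ Y₂ ω ≤ z₄} ≤
        ℙ {ω | Xs₁ ω ≤ z₁ ∧ Xs₂ ω ≤ z₂ ∧ Ys₁ ω ≤ z₃ ∧ Ys₂ ω ≤ z₄} := by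
  intro z₁ z₂ z₃ z₄
  have hS : MeasurableSet {p : ℝ × ℝ × ℝ × ℝ |
      p.1 ≤ z₁ ∧ p.2.1 ≤ z₂ ∧ p.2.2.1 ≤ z₃ ∧ p.2.2.2 ≤ z₄} := by
    have h1 : Measurable fun p : ℝ × ℝ × ℝ × ℝ => p.1 := measurable_fst
    have h2 : Measurable fun p : ℝ × ℝ × ℝ × ℝ => p.2.1 :=
      measurable_fst.comp measurable_snd
    have h3 : Measurable fun p : ℝ × ℝ × ℝ × ℝ => p.2.2.1 :=
      measurable_fst.comp (measurable_snd.comp measurable_snd)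
    have h4 : Measurable fun p : ℝ × ℝ × ℝ × ℝ => p.2.2.2 :=
      measurable_snd.comp (measurable_snd.comp measurable_snd)
    exact (measurableSet_le h1 measurable_const).inter
      ((measurableSet_le h2 measurable_const).inter
        ((measurableSet_le h3 measurable_const).inter
          (measurableSet_le h4 measurable_const)))
  have hpre : {ω | X₁ ω ≤ z₁ ∧ X₂ ω ≤ z₂ ∧ Y₁ ω ≤ z₃ ∧ Y₂ ω ≤ z₄}
      = (fun ω => (X₁ ω, X₂ ω, Y₁ ω, Y₂ ω)) ⁻¹'
        {p : ℝ × ℝ × ℝ × ℝ | p.1 ≤ z₁ ∧ p.2.1 ≤ z₂ ∧ p.2.2.1 ≤ z₃ ∧ p.2.2.2 ≤ z₄} := rfl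
  have hpres : {ω | Xs₁ ω ≤ z₁ ∧ Xs₂ ω ≤ z₂ ∧ Ys₁ ω ≤ z₃ ∧ Ys₂ ω ≤ z₄}
      = (fun ω => (Xs₁ ω, Xs₂ ω, Ys₁ ω, Ys₂ ω)) ⁻¹'
        {p : ℝ × ℝ × ℝ × ℝ | p.1 ≤ z₁ ∧ p.2.1 ≤ z₂ ∧ p.2.2.1 ≤ z₃ ∧ p.2.2.2 ≤ z₄} := rfl
  rw [hpre, hpres, ← Measure.map_apply hV hS, ← Measure.map_apply hW hS, hlaw, hlaws,
    withDensity_apply _ hS, withDensity_apply _ hS]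
  simp only [fdens, fstar]
  rw [cdf_eval_f z₁ z₂ z₃ z₄ hS, cdf_eval_fstar z₁ z₂ z₃ z₄ hS]
  have hA : volume {q : ℝ × ℝ | (1 < q.2 ∧ q.2 < q.1 ∧ q.1 ≤ 2) ∧ q.1 ≤ z₁ ∧ q.2 ≤ z₂} ≤
      volume {q : ℝ × ℝ | (0 ≤ q.1 ∧ q.1 ≤ q.2 ∧ q.2 ≤ 1) ∧ q.1 ≤ z₁ ∧ q.2 ≤ z₂} := by
    rcases le_or_gt z₁ 1 with hz | hz₁
    · have hempty : {q : ℝ × ℝ | (1 < q.2 ∧ q.2 < q.1 ∧ q.1 ≤ 2) ∧ q.1 ≤ z₁ ∧ q.2 ≤ z₂}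
          = (∅ : Set (ℝ × ℝ)) := by
        ext q
        simp only [Set.mem_setOf_eq, Set.mem_empty_iff_false, iff_false]
        rintro ⟨⟨h1, h2, h3⟩, h4, h5⟩
        linarith
      rw [hempty, measure_empty]
      exact zero_le
    · rcases le_or_gt z₂ 1 with hz | hz₂
      · have hempty : {q : ℝ × ℝ | (1 < q.2 ∧ q.2 < q.1 ∧ q.1 ≤ 2) ∧ q.1 ≤ z₁ ∧ q.2 ≤ z₂}
            = (∅ : Set (ℝ × ℝ)) := by
          ext q
          simp only [Set.mem_setOf_eq, Set.mem_empty_iff_false, iff_false]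
          rintro ⟨⟨h1, h2, h3⟩, h4, h5⟩
          linarith
        rw [hempty, measure_empty]
        exact zero_le
      · calc volume {q : ℝ × ℝ | (1 < q.2 ∧ q.2 < q.1 ∧ q.1 ≤ 2) ∧ q.1 ≤ z₁ ∧ q.2 ≤ z₂}
            ≤ volume {q : ℝ × ℝ | 1 < q.2 ∧ q.2 < q.1 ∧ q.1 ≤ 2} :=
              measure_mono (fun q hq => hq.1)
          _ = 1/2 := vol_Tlo2
          _ = volume {q : ℝ × ℝ | 0 ≤ q.1 ∧ q.1 ≤ q.2 ∧ q.2 ≤ 1} := vol_Tup.symm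
          _ ≤ volume {q : ℝ × ℝ | (0 ≤ q.1 ∧ q.1 ≤ q.2 ∧ q.2 ≤ 1) ∧ q.1 ≤ z₁ ∧ q.2 ≤ z₂} := by
              refine measure_mono (fun q hq => ⟨hq, ?_, ?_⟩)
              · linarith [hq.2.1, hq.2.2]
              · linarith [hq.2.2]
  have hB : volume {q : ℝ × ℝ | (1 < q.1 ∧ q.1 ≤ q.2 ∧ q.2 ≤ 2) ∧ q.1 ≤ z₃ ∧ q.2 ≤ z₄} ≤
      volume {q : ℝ × ℝ | (0 ≤ q.2 ∧ q.2 < q.1 ∧ q.1 ≤ 1) ∧ q.1 ≤ z₃ ∧ q.2 ≤ z₄} := by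
    rcases le_or_gt z₃ 1 with hz | hz₃
    · have hempty : {q : ℝ × ℝ | (1 < q.1 ∧ q.1 ≤ q.2 ∧ q.2 ≤ 2) ∧ q.1 ≤ z₃ ∧ q.2 ≤ z₄}
          = (∅ : Set (ℝ × ℝ)) := by
        ext q
        simp only [Set.mem_setOf_eq, Set.mem_empty_iff_false, iff_false]
        rintro ⟨⟨h1, h2, h3⟩, h4, h5⟩
        linarith
      rw [hempty, measure_empty]
      exact zero_le
    · rcases le_or_gt z₄ 1 with hz | hz₄
      · have hempty : {q : ℝ × ℝ | (1 < q.1 ∧ q.1 ≤ q.2 ∧ q.2 ≤ 2) ∧ q.1 ≤ z₃ ∧ q.2 ≤ z₄}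
            = (∅ : Set (ℝ × ℝ)) := by
          ext q
          simp only [Set.mem_setOf_eq, Set.mem_empty_iff_false, iff_false]
          rintro ⟨⟨h1, h2, h3⟩, h4, h5⟩
          linarith
        rw [hempty, measure_empty]
        exact zero_le
      · calc volume {q : ℝ × ℝ | (1 < q.1 ∧ q.1 ≤ q.2 ∧ q.2 ≤ 2) ∧ q.1 ≤ z₃ ∧ q.2 ≤ z₄}
            ≤ volume {q : ℝ × ℝ | 1 < q.1 ∧ q.1 ≤ q.2 ∧ q.2 ≤ 2} :=
              measure_mono (fun q hq => hq.1)
          _ = 1/2 := vol_Tup2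
          _ = volume {q : ℝ × ℝ | 0 ≤ q.2 ∧ q.2 < q.1 ∧ q.1 ≤ 1} := vol_Tlo.symm
          _ ≤ volume {q : ℝ × ℝ | (0 ≤ q.2 ∧ q.2 < q.1 ∧ q.1 ≤ 1) ∧ q.1 ≤ z₃ ∧ q.2 ≤ z₄} := by
              refine measure_mono (fun q hq => ⟨hq, ?_, ?_⟩)
              · linarith [hq.2.2]
              · linarith [hq.1, hq.2.1, hq.2.2]
  exact rearrange _ _ _ _ _ _ _ _ hA hB
end

section
/- There exist random vectors (X,Y) and (X*,Y*) in ℝ² × ℝ² with X =_d X*, Y =_d Y*, stationary marginals (X_1 =_d X_2, Y_1 =_d Y_2), continuous marginal distributions, satisfying the concordance ordering (X,Y) ≼_C (X*,Y*) (pointwise domination of both the joint cdf and the joint survival function), but with OPD_2(X,Y) > OPD_2(X*,Y*). Hence ordinal pattern dependence does not respect concordance ordering. -/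
open MeasureTheory

def IsOrdPattern {d : ℕ} (x : Fin d → ℝ) (π : Equiv.Perm (Fin d)) : Prop :=
  ∀ i j, π i < π j ↔ (x i < x j ∨ (x i = x j ∧ i < j))

noncomputable def OPD {Ω : Type*} [MeasurableSpace Ω] (ℙ : Measure Ω) {d : ℕ}
    (Pat : (Fin d → ℝ) → Equiv.Perm (Fin d)) (X Y : Ω → Fin d → ℝ) : ℝ :=
  ((ℙ {ω | Pat (X ω) = Pat (Y ω)}).toReal -
      ∑ π : Equiv.Perm (Fin d),
        (ℙ {ω | Pat (X ω) = π}).toReal * (ℙ {ω | Pat (Y ω) = π}).toReal) /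
    (1 - ∑ π : Equiv.Perm (Fin d),
        (ℙ {ω | Pat (X ω) = π}).toReal * (ℙ {ω | Pat (Y ω) = π}).toReal)

namespace OPDAux

open Set
open MeasureTheory


noncomputable def blk (p q r s : ℝ) (u : ℝ) : ℝ :=
  if u < 1/4 then p + u
  else if u < 1/2 then q + (u - 1/4)
  else if u < 3/4 then r + (u - 1/2)
  else s + (u - 3/4)

lemma blk_meas (p q r s : ℝ) : Measurable (blk p q r s) := by
  unfold blk
  refine Measurable.ite (measurableSet_lt measurable_id measurable_const) (by fun_prop) ?_
  refine Measurable.ite (measurableSet_lt measurable_id measurable_const) (by fun_prop) ?_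
  exact Measurable.ite (measurableSet_lt measurable_id measurable_const) (by fun_prop) (by fun_prop)

lemma blk_at0 {u : ℝ} (p q r s : ℝ) (h : u < 1/4) : blk p q r s u = p + u := if_pos h

lemma blk_at1 {u : ℝ} (p q r s : ℝ) (h1 : 1/4 ≤ u) (h2 : u < 1/2) :
    blk p q r s u = q + (u - 1/4) := by
  unfold blk; rw [if_neg (by linarith), if_pos h2]

lemma blk_at2 {u : ℝ} (p q r s : ℝ) (h1 : 1/2 ≤ u) (h2 : u < 3/4) :
    blk p q r s u = r + (u - 1/2) := by
  unfold blk; rw [if_neg (by linarith), if_neg (by linarith), if_pos h2]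

lemma blk_at3 {u : ℝ} (p q r s : ℝ) (h1 : 3/4 ≤ u) :
    blk p q r s u = s + (u - 3/4) := by
  unfold blk; rw [if_neg (by linarith), if_neg (by linarith), if_neg (by linarith)]

lemma map_addc (l r c : ℝ) : Measure.map (fun u : ℝ => u + c) (volume.restrict (Ico l r)) =
    volume.restrict (Ico (l+c) (r+c)) := by
  have h : Ico l r = (fun u : ℝ => u + c) ⁻¹' Ico (l+c) (r+c) := by
    ext u; simp only [mem_Ico, mem_preimage]
    constructor <;> rintro ⟨h1, h2⟩ <;> constructor <;> linarith
  rw [h, ← Measure.restrict_map (measurable_add_const c) measurableSet_Ico,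
    map_add_right_eq_self]

lemma vol_split (A : Set ℝ) (hA : MeasurableSet A) :
    volume (A ∩ Ico (0:ℝ) 1) =
      volume (A ∩ Ico (0:ℝ) (1/4)) + volume (A ∩ Ico (1/4 : ℝ) (1/2)) +
      volume (A ∩ Ico (1/2 : ℝ) (3/4)) + volume (A ∩ Ico (3/4 : ℝ) 1) := by
  have key : ∀ a c b : ℝ, a ≤ c → c ≤ b →
      volume (A ∩ Ico a b) = volume (A ∩ Ico a c) + volume (A ∩ Ico c b) := by
    intro a c b hac hcb
    rw [← Ico_union_Ico_eq_Ico hac hcb, inter_union_distrib_left]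
    exact measure_union (Disjoint.mono inter_subset_right inter_subset_right
      Set.Ico_disjoint_Ico_same) (hA.inter measurableSet_Ico)
  rw [key 0 (1/4) 1 (by norm_num) (by norm_num),
    key (1/4) (1/2) 1 (by norm_num) (by norm_num),
    key (1/2) (3/4) 1 (by norm_num) (by norm_num)]
  ring

lemma vol_Ico_Iic (l m : ℝ) : volume (Ico l (l + 1/4) ∩ Iic (l + m)) =
    ENNReal.ofReal (min (1/4) m) := by
  rcases le_total (1/4 : ℝ) m with h | h
  · have : Ico l (l + 1/4) ∩ Iic (l + m) = Ico l (l + 1/4) := by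
      refine inter_eq_left.2 ?_
      intro u hu; exact le_trans (le_of_lt hu.2) (by linarith)
    rw [this, Real.volume_Ico, min_eq_left h]; ring_nf
  · have h1 : Ico l (l + 1/4) ∩ Iic (l + m) ⊆ Icc l (l + m) := by
      rintro u ⟨⟨h2, h3⟩, h4⟩; exact ⟨h2, h4⟩
    have h2 : Ico l (l + m) ⊆ Ico l (l + 1/4) ∩ Iic (l + m) := by
      rintro u ⟨h2, h3⟩; exact ⟨⟨h2, by linarith⟩, le_of_lt h3⟩
    refine le_antisymm ?_ ?_
    · refine le_trans (measure_mono h1) ?_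
      rw [Real.volume_Icc, min_eq_right h]; exact le_of_eq (by ring_nf)
    · refine le_trans ?_ (measure_mono h2)
      rw [Real.volume_Ico, min_eq_right h]; exact le_of_eq (by ring_nf)

lemma vol_Ico_Ici (l c : ℝ) : volume (Ico l (l + 1/4) ∩ Ici c) =
    ENNReal.ofReal (min (1/4) (l + 1/4 - c)) := by
  have h : Ico l (l + 1/4) ∩ Ici c = Ico (max l c) (l + 1/4) := by
    ext u; simp only [mem_inter_iff, mem_Ico, mem_Ici, max_le_iff]
    tauto
  rw [h, Real.volume_Ico]
  congr 1
  rcases le_total l c with h | h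
  · rw [max_eq_right h, min_eq_right (by linarith)]
  · rw [max_eq_left h, min_eq_left (by linarith)]; ring

noncomputable def μ : Measure ℝ := volume.restrict (Ico (0:ℝ) 1)

instance : IsProbabilityMeasure μ :=
  ⟨by rw [μ, Measure.restrict_apply_univ, Real.volume_Ico]; norm_num⟩

lemma μ_split : μ = volume.restrict (Ico (0:ℝ) (1/4)) + volume.restrict (Ico (1/4:ℝ) (1/2))
    + volume.restrict (Ico (1/2:ℝ) (3/4)) + volume.restrict (Ico (3/4:ℝ) 1) := by
  have key : ∀ a c b : ℝ, a ≤ c → c ≤ b →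
      volume.restrict (Ico a b) = volume.restrict (Ico a c) + volume.restrict (Ico c b) := by
    intro a c b hac hcb
    rw [← Ico_union_Ico_eq_Ico hac hcb,
      Measure.restrict_union Set.Ico_disjoint_Ico_same measurableSet_Ico]
  rw [μ, key 0 (1/4) 1 (by norm_num) (by norm_num),
    key (1/4) (1/2) 1 (by norm_num) (by norm_num),
    key (1/2) (3/4) 1 (by norm_num) (by norm_num)]
  abel

lemma map_block {α : Type*} [MeasurableSpace α] (F : ℝ → α) (G : ℝ → α) (hG : Measurable G)
    (l : ℝ) (hF : ∀ u, l ≤ u → u < l + 1/4 → F u = G (u - l)) :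
    Measure.map F (volume.restrict (Ico l (l + 1/4))) =
      Measure.map G (volume.restrict (Ico (0:ℝ) (1/4))) := by
  have h1 : F =ᵐ[volume.restrict (Ico l (l + 1/4))] (G ∘ fun u => u + (-l)) := by
    refine (ae_restrict_iff' measurableSet_Ico).2 (Filter.Eventually.of_forall ?_)
    intro u hu
    simp only [Function.comp_apply]
    rw [show u + (-l) = u - l by ring]
    exact hF u hu.1 hu.2
  rw [Measure.map_congr h1, ← Measure.map_map hG (measurable_add_const (-l)), map_addc]
  norm_num

noncomputable def pf (c0 c1 : ℝ) : ℝ → (Fin 2 → ℝ) := fun t => ![c0 + t, c1 + t]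

lemma pf_meas (c0 c1 : ℝ) : Measurable (pf c0 c1) := by
  unfold pf
  refine measurable_pi_iff.2 fun i => ?_
  fin_cases i <;> simp <;> fun_prop

lemma map_blk_pair (p q r s p' q' r' s' : ℝ) :
    Measure.map (fun u => ![blk p q r s u, blk p' q' r' s' u]) μ =
      Measure.map (pf p p') (volume.restrict (Ico (0:ℝ) (1/4))) +
      Measure.map (pf q q') (volume.restrict (Ico (0:ℝ) (1/4))) +
      Measure.map (pf r r') (volume.restrict (Ico (0:ℝ) (1/4))) +
      Measure.map (pf s s') (volume.restrict (Ico (0:ℝ) (1/4))) := by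
  have hmeas : Measurable (fun u => ![blk p q r s u, blk p' q' r' s' u]) := by
    refine measurable_pi_iff.2 fun i => ?_
    fin_cases i <;> simp <;> exact blk_meas _ _ _ _
  rw [μ_split, Measure.map_add _ _ hmeas, Measure.map_add _ _ hmeas, Measure.map_add _ _ hmeas]
  congr 1
  congr 1
  congr 1
  · conv_lhs => rw [show Ico (0:ℝ) (1/4) = Ico (0:ℝ) (0 + 1/4) by norm_num]
    refine map_block _ _ (pf_meas p p') 0 fun u h1 h2 => ?_
    funext i; fin_cases i <;>
      simp [pf, blk_at0 _ _ _ _ (by linarith : u < 1/4)]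
  · rw [show Ico (1/4:ℝ) (1/2) = Ico (1/4:ℝ) (1/4 + 1/4) by norm_num]
    refine map_block _ _ (pf_meas q q') (1/4) fun u h1 h2 => ?_
    funext i; fin_cases i <;>
      simp [pf, blk_at1 _ _ _ _ h1 (by linarith : u < 1/2)]
  · rw [show Ico (1/2:ℝ) (3/4) = Ico (1/2:ℝ) (1/2 + 1/4) by norm_num]
    refine map_block _ _ (pf_meas r r') (1/2) fun u h1 h2 => ?_
    funext i; fin_cases i <;>
      simp [pf, blk_at2 _ _ _ _ h1 (by linarith : u < 3/4)]
  · rw [show Ico (3/4:ℝ) 1 = Ico (3/4:ℝ) (3/4 + 1/4) by norm_num]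
    refine map_block _ _ (pf_meas s s') (3/4) fun u h1 h2 => ?_
    funext i; fin_cases i <;>
      simp [pf, blk_at3 _ _ _ _ h1]

lemma map_blk_single (p q r s : ℝ) :
    Measure.map (blk p q r s) μ =
      volume.restrict (Ico p (p + 1/4)) + volume.restrict (Ico q (q + 1/4)) +
      volume.restrict (Ico r (r + 1/4)) + volume.restrict (Ico s (s + 1/4)) := by
  have haux : ∀ c : ℝ, Measure.map (fun t : ℝ => c + t) (volume.restrict (Ico (0:ℝ) (1/4))) =
      volume.restrict (Ico c (c + 1/4)) := by
    intro c
    rw [show (fun t : ℝ => c + t) = (fun t : ℝ => t + c) by funext t; ring, map_addc]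
    norm_num [add_comm]
  rw [μ_split, Measure.map_add _ _ (blk_meas p q r s), Measure.map_add _ _ (blk_meas p q r s),
    Measure.map_add _ _ (blk_meas p q r s)]
  congr 1
  congr 1
  congr 1
  · conv_lhs => rw [show Ico (0:ℝ) (1/4) = Ico (0:ℝ) (0 + 1/4) by norm_num]
    rw [← haux p]
    exact map_block _ _ (by fun_prop) 0 fun u h1 h2 => by
      rw [blk_at0 _ _ _ _ (by linarith : u < 1/4)]; ring
  · rw [show Ico (1/4:ℝ) (1/2) = Ico (1/4:ℝ) (1/4 + 1/4) by norm_num, ← haux q]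
    exact map_block _ _ (by fun_prop) (1/4) fun u h1 h2 => by
      rw [blk_at1 _ _ _ _ h1 (by linarith : u < 1/2)]
  · rw [show Ico (1/2:ℝ) (3/4) = Ico (1/2:ℝ) (1/2 + 1/4) by norm_num, ← haux r]
    exact map_block _ _ (by fun_prop) (1/2) fun u h1 h2 => by
      rw [blk_at2 _ _ _ _ h1 (by linarith : u < 3/4)]
  · rw [show Ico (3/4:ℝ) 1 = Ico (3/4:ℝ) (3/4 + 1/4) by norm_num, ← haux s]
    exact map_block _ _ (by fun_prop) (3/4) fun u h1 h2 => by
      rw [blk_at3 _ _ _ _ h1]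


noncomputable def Xf : ℝ → Fin 2 → ℝ := fun u => ![blk 1 2 5 4 u, blk 2 1 4 5 u]
noncomputable def Yf : ℝ → Fin 2 → ℝ := fun u => ![blk 4 5 2 1 u, blk 5 4 1 2 u]
noncomputable def Ysf : ℝ → Fin 2 → ℝ := fun u => ![blk 2 1 4 5 u, blk 1 2 5 4 u]

noncomputable def T : ℝ → ((Fin 2 → ℝ) × (Fin 2 → ℝ)) × ((Fin 2 → ℝ) × (Fin 2 → ℝ)) :=
  fun u => ((Xf u, Yf u), (Xf u, Ysf u))

lemma Xf_meas : Measurable Xf := by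
  refine measurable_pi_iff.2 fun i => ?_
  fin_cases i <;> simp [Xf] <;> exact blk_meas _ _ _ _

lemma Yf_meas : Measurable Yf := by
  refine measurable_pi_iff.2 fun i => ?_
  fin_cases i <;> simp [Yf] <;> exact blk_meas _ _ _ _

lemma Ysf_meas : Measurable Ysf := by
  refine measurable_pi_iff.2 fun i => ?_
  fin_cases i <;> simp [Ysf] <;> exact blk_meas _ _ _ _

lemma T_meas : Measurable T :=
  ((Xf_meas.prodMk Yf_meas).prodMk (Xf_meas.prodMk Ysf_meas))

noncomputable def Pm : Measure (((Fin 2 → ℝ) × (Fin 2 → ℝ)) × ((Fin 2 → ℝ) × (Fin 2 → ℝ))) :=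
  Measure.map T μ

instance : IsProbabilityMeasure Pm := Measure.isProbabilityMeasure_map T_meas.aemeasurable

lemma P_apply (S : Set (((Fin 2 → ℝ) × (Fin 2 → ℝ)) × ((Fin 2 → ℝ) × (Fin 2 → ℝ))))
    (hS : MeasurableSet S) : Pm S = volume (T ⁻¹' S ∩ Ico (0:ℝ) 1) := by
  rw [Pm, Measure.map_apply T_meas hS, μ, Measure.restrict_apply (T_meas hS)]

lemma hX_meas : Measurable fun ω : ((Fin 2 → ℝ) × (Fin 2 → ℝ)) × ((Fin 2 → ℝ) × (Fin 2 → ℝ)) => ω.1.1 :=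
  measurable_fst.comp measurable_fst
lemma hY_meas : Measurable fun ω : ((Fin 2 → ℝ) × (Fin 2 → ℝ)) × ((Fin 2 → ℝ) × (Fin 2 → ℝ)) => ω.1.2 :=
  measurable_snd.comp measurable_fst
lemma hXs_meas : Measurable fun ω : ((Fin 2 → ℝ) × (Fin 2 → ℝ)) × ((Fin 2 → ℝ) × (Fin 2 → ℝ)) => ω.2.1 :=
  measurable_fst.comp measurable_snd
lemma hYs_meas : Measurable fun ω : ((Fin 2 → ℝ) × (Fin 2 → ℝ)) × ((Fin 2 → ℝ) × (Fin 2 → ℝ)) => ω.2.2 :=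
  measurable_snd.comp measurable_snd

lemma eqdist_X : Measure.map (fun ω : ((Fin 2 → ℝ) × (Fin 2 → ℝ)) × ((Fin 2 → ℝ) × (Fin 2 → ℝ)) => ω.1.1) Pm
    = Measure.map (fun ω : ((Fin 2 → ℝ) × (Fin 2 → ℝ)) × ((Fin 2 → ℝ) × (Fin 2 → ℝ)) => ω.2.1) Pm := by
  rw [Pm, Measure.map_map hX_meas T_meas, Measure.map_map hXs_meas T_meas]
  rfl

lemma eqdist_Y : Measure.map (fun ω : ((Fin 2 → ℝ) × (Fin 2 → ℝ)) × ((Fin 2 → ℝ) × (Fin 2 → ℝ)) => ω.1.2) Pm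
    = Measure.map (fun ω : ((Fin 2 → ℝ) × (Fin 2 → ℝ)) × ((Fin 2 → ℝ) × (Fin 2 → ℝ)) => ω.2.2) Pm := by
  rw [Pm, Measure.map_map hY_meas T_meas, Measure.map_map hYs_meas T_meas]
  show Measure.map (fun u => ![blk 4 5 2 1 u, blk 5 4 1 2 u]) μ
    = Measure.map (fun u => ![blk 2 1 4 5 u, blk 1 2 5 4 u]) μ
  rw [map_blk_pair, map_blk_pair]
  abel

lemma stat_X : Measure.map (fun ω : ((Fin 2 → ℝ) × (Fin 2 → ℝ)) × ((Fin 2 → ℝ) × (Fin 2 → ℝ)) => ω.1.1 0) Pm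
    = Measure.map (fun ω : ((Fin 2 → ℝ) × (Fin 2 → ℝ)) × ((Fin 2 → ℝ) × (Fin 2 → ℝ)) => ω.1.1 1) Pm := by
  rw [Pm, Measure.map_map (show Measurable fun ω : ((Fin 2 → ℝ) × (Fin 2 → ℝ)) × ((Fin 2 → ℝ) × (Fin 2 → ℝ)) => ω.1.1 0 from (measurable_pi_apply 0).comp hX_meas) T_meas,
    Measure.map_map (show Measurable fun ω : ((Fin 2 → ℝ) × (Fin 2 → ℝ)) × ((Fin 2 → ℝ) × (Fin 2 → ℝ)) => ω.1.1 1 from (measurable_pi_apply 1).comp hX_meas) T_meas]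
  show Measure.map (blk 1 2 5 4) μ = Measure.map (blk 2 1 4 5) μ
  rw [map_blk_single, map_blk_single]
  abel

lemma stat_Y : Measure.map (fun ω : ((Fin 2 → ℝ) × (Fin 2 → ℝ)) × ((Fin 2 → ℝ) × (Fin 2 → ℝ)) => ω.1.2 0) Pm
    = Measure.map (fun ω : ((Fin 2 → ℝ) × (Fin 2 → ℝ)) × ((Fin 2 → ℝ) × (Fin 2 → ℝ)) => ω.1.2 1) Pm := by
  rw [Pm, Measure.map_map (show Measurable fun ω : ((Fin 2 → ℝ) × (Fin 2 → ℝ)) × ((Fin 2 → ℝ) × (Fin 2 → ℝ)) => ω.1.2 0 from (measurable_pi_apply 0).comp hY_meas) T_meas,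
    Measure.map_map (show Measurable fun ω : ((Fin 2 → ℝ) × (Fin 2 → ℝ)) × ((Fin 2 → ℝ) × (Fin 2 → ℝ)) => ω.1.2 1 from (measurable_pi_apply 1).comp hY_meas) T_meas]
  show Measure.map (blk 4 5 2 1) μ = Measure.map (blk 5 4 1 2) μ
  rw [map_blk_single, map_blk_single]
  abel

lemma blk_atomless (p q r s x : ℝ) :
    volume ({u : ℝ | blk p q r s u = x} ∩ Ico (0:ℝ) 1) = 0 := by
  refine measure_mono_null (fun u hu => ?_)
    (((((Set.finite_singleton (x - s + 3/4)).insert (x - r + 1/2)).insert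
      (x - q + 1/4)).insert (x - p)).measure_zero volume)
  obtain ⟨hm, h0, h1⟩ := hu
  simp only [mem_setOf_eq] at hm
  simp only [mem_insert_iff, mem_singleton_iff]
  rcases lt_or_ge u (1/4 : ℝ) with h | h
  · rw [blk_at0 _ _ _ _ h] at hm; left; linarith
  rcases lt_or_ge u (1/2 : ℝ) with h' | h'
  · rw [blk_at1 _ _ _ _ h h'] at hm; right; left; linarith
  rcases lt_or_ge u (3/4 : ℝ) with h'' | h''
  · rw [blk_at2 _ _ _ _ h' h''] at hm; right; right; left; linarith
  · rw [blk_at3 _ _ _ _ h''] at hm; right; right; right; linarith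


lemma min4_le₁ (A B C D : ℝ) : min (min A B) (min C D) ≤ A :=
  (min_le_left _ _).trans (min_le_left _ _)
lemma min4_le₂ (A B C D : ℝ) : min (min A B) (min C D) ≤ B :=
  (min_le_left _ _).trans (min_le_right _ _)
lemma min4_le₃ (A B C D : ℝ) : min (min A B) (min C D) ≤ C :=
  (min_le_right _ _).trans (min_le_left _ _)
lemma min4_le₄ (A B C D : ℝ) : min (min A B) (min C D) ≤ D :=
  (min_le_right _ _).trans (min_le_right _ _)

lemma le_min4 {x A B C D : ℝ} (h1 : x ≤ A) (h2 : x ≤ B) (h3 : x ≤ C) (h4 : x ≤ D) :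
    x ≤ min (min A B) (min C D) := le_min (le_min h1 h2) (le_min h3 h4)

lemma min4_mono {A B C D A' B' C' D' : ℝ} (h1 : A ≤ A') (h2 : B ≤ B') (h3 : C ≤ C')
    (h4 : D ≤ D') : min (min A B) (min C D) ≤ min (min A' B') (min C' D') :=
  min_le_min (min_le_min h1 h2) (min_le_min h3 h4)

/-- the lattice rearrangement inequality for one pair of blocks -/
lemma key_pair (c m m' M M' : ℝ) (h1 : min m m' ≤ M') (h2 : m ≤ M) (h3 : m' ≤ M) :
    ENNReal.ofReal (min c m) + ENNReal.ofReal (min c m') ≤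
      ENNReal.ofReal (min c M) + ENNReal.ofReal (min c M') := by
  rcases le_total m m' with h | h
  · rw [min_eq_left h] at h1
    calc ENNReal.ofReal (min c m) + ENNReal.ofReal (min c m')
        ≤ ENNReal.ofReal (min c M') + ENNReal.ofReal (min c M) :=
          add_le_add (ENNReal.ofReal_le_ofReal (min_le_min le_rfl h1))
            (ENNReal.ofReal_le_ofReal (min_le_min le_rfl h3))
      _ = _ := add_comm _ _
  · rw [min_eq_right h] at h1
    exact add_le_add (ENNReal.ofReal_le_ofReal (min_le_min le_rfl h2))
      (ENNReal.ofReal_le_ofReal (min_le_min le_rfl h1))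

lemma cdf_block (S : Set ℝ) (l r A B C D a0 a1 b0 b1 : ℝ) (hr : r = l + 1/4)
    (hS : ∀ u, l ≤ u → u < l + 1/4 →
      (u ∈ S ↔ (A + (u - l) ≤ a0 ∧ B + (u - l) ≤ a1 ∧ C + (u - l) ≤ b0 ∧ D + (u - l) ≤ b1))) :
    volume (S ∩ Ico l r) =
      ENNReal.ofReal (min (1/4) (min (min (a0 - A) (a1 - B)) (min (b0 - C) (b1 - D)))) := by
  subst hr
  have hset : S ∩ Ico l (l + 1/4) =
      Ico l (l + 1/4) ∩ Iic (l + min (min (a0 - A) (a1 - B)) (min (b0 - C) (b1 - D))) := by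
    ext u
    simp only [mem_inter_iff, mem_Ico, mem_Iic]
    constructor
    · rintro ⟨hu, h1, h2⟩
      obtain ⟨k1, k2, k3, k4⟩ := (hS u h1 h2).1 hu
      refine ⟨⟨h1, h2⟩, ?_⟩
      rw [← sub_le_iff_le_add']
      exact le_min4 (by linarith) (by linarith) (by linarith) (by linarith)
    · rintro ⟨⟨h1, h2⟩, h3⟩
      rw [← sub_le_iff_le_add'] at h3
      refine ⟨(hS u h1 h2).2 ⟨?_, ?_, ?_, ?_⟩, h1, h2⟩
      · have := h3.trans (min4_le₁ _ _ _ _); linarith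
      · have := h3.trans (min4_le₂ _ _ _ _); linarith
      · have := h3.trans (min4_le₃ _ _ _ _); linarith
      · have := h3.trans (min4_le₄ _ _ _ _); linarith
  rw [hset, vol_Ico_Iic]

lemma surv_block (S : Set ℝ) (l r A B C D a0 a1 b0 b1 : ℝ) (hr : r = l + 1/4)
    (hS : ∀ u, l ≤ u → u < l + 1/4 →
      (u ∈ S ↔ (a0 ≤ A + (u - l) ∧ a1 ≤ B + (u - l) ∧ b0 ≤ C + (u - l) ∧ b1 ≤ D + (u - l)))) :
    volume (S ∩ Ico l r) =
      ENNReal.ofReal (min (1/4)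
        (min (min (A + 1/4 - a0) (B + 1/4 - a1)) (min (C + 1/4 - b0) (D + 1/4 - b1)))) := by
  subst hr
  have hset : S ∩ Ico l (l + 1/4) =
      Ico l (l + 1/4) ∩ Ici (l + max (max (a0 - A) (a1 - B)) (max (b0 - C) (b1 - D))) := by
    ext u
    simp only [mem_inter_iff, mem_Ico, mem_Ici]
    constructor
    · rintro ⟨hu, h1, h2⟩
      obtain ⟨k1, k2, k3, k4⟩ := (hS u h1 h2).1 hu
      refine ⟨⟨h1, h2⟩, ?_⟩
      rw [← le_sub_iff_add_le']
      exact max_le (max_le (by linarith) (by linarith)) (max_le (by linarith) (by linarith))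
    · rintro ⟨⟨h1, h2⟩, h3⟩
      rw [← le_sub_iff_add_le'] at h3
      have t1 := le_trans (le_max_left _ _ |>.trans (le_max_left _ _)) h3
      have t2 := le_trans (le_max_right _ _ |>.trans (le_max_left _ _)) h3
      have t3 := le_trans (le_max_left _ _ |>.trans (le_max_right _ _)) h3
      have t4 := le_trans (le_max_right _ _ |>.trans (le_max_right _ _)) h3
      exact ⟨(hS u h1 h2).2 ⟨by linarith, by linarith, by linarith, by linarith⟩, h1, h2⟩
  rw [hset, vol_Ico_Ici]
  congr 1
  have e1 : ∀ x y : ℝ, l + 1/4 - (l + max x y) = min (1/4 - x) (1/4 - y) := by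
    intro x y
    rcases le_total x y with h | h
    · rw [max_eq_right h, min_eq_right (by linarith)]; ring
    · rw [max_eq_left h, min_eq_left (by linarith)]; ring
  have e2 : ∀ x y : ℝ, (1:ℝ)/4 - max x y = min (1/4 - x) (1/4 - y) := by
    intro x y
    rcases le_total x y with h | h
    · rw [max_eq_right h, min_eq_right (by linarith)]
    · rw [max_eq_left h, min_eq_left (by linarith)]
  rw [e1, e2, e2]
  simp only [show ∀ x y : ℝ, 1/4 - (x - y) = y + 1/4 - x from fun x y => by ring]


abbrev Om := ((Fin 2 → ℝ) × (Fin 2 → ℝ)) × ((Fin 2 → ℝ) × (Fin 2 → ℝ))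

lemma measCDF (f g : Om → Fin 2 → ℝ) (hf : Measurable f) (hg : Measurable g) (a b : Fin 2 → ℝ) :
    MeasurableSet {ω | (∀ i, f ω i ≤ a i) ∧ (∀ i, g ω i ≤ b i)} := by
  have : {ω | (∀ i, f ω i ≤ a i) ∧ (∀ i, g ω i ≤ b i)} =
      (⋂ i, {ω | f ω i ≤ a i}) ∩ ⋂ i, {ω | g ω i ≤ b i} := by
    ext ω; simp [mem_iInter]
  rw [this]
  exact (MeasurableSet.iInter fun i =>
      measurableSet_le ((measurable_pi_apply i).comp hf) measurable_const).inter
    (MeasurableSet.iInter fun i =>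
      measurableSet_le ((measurable_pi_apply i).comp hg) measurable_const)

lemma measSURV (f g : Om → Fin 2 → ℝ) (hf : Measurable f) (hg : Measurable g) (a b : Fin 2 → ℝ) :
    MeasurableSet {ω | (∀ i, a i ≤ f ω i) ∧ (∀ i, b i ≤ g ω i)} := by
  have : {ω | (∀ i, a i ≤ f ω i) ∧ (∀ i, b i ≤ g ω i)} =
      (⋂ i, {ω | a i ≤ f ω i}) ∩ ⋂ i, {ω | b i ≤ g ω i} := by
    ext ω; simp [mem_iInter]
  rw [this]
  exact (MeasurableSet.iInter fun i =>
      measurableSet_le measurable_const ((measurable_pi_apply i).comp hf)).inter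
    (MeasurableSet.iInter fun i =>
      measurableSet_le measurable_const ((measurable_pi_apply i).comp hg))

lemma conc_cdf (a b : Fin 2 → ℝ) :
    Pm {ω : Om | (∀ i, ω.1.1 i ≤ a i) ∧ (∀ i, ω.1.2 i ≤ b i)} ≤
      Pm {ω : Om | (∀ i, ω.2.1 i ≤ a i) ∧ (∀ i, ω.2.2 i ≤ b i)} := by
  have hS1 := measCDF _ _ hX_meas hY_meas a b
  have hS2 := measCDF _ _ hXs_meas hYs_meas a b
  rw [P_apply _ hS1, P_apply _ hS2, vol_split _ (T_meas hS1), vol_split _ (T_meas hS2)]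
  have huns : ∀ u : ℝ, u ∈ T ⁻¹' {ω : Om | (∀ i, ω.1.1 i ≤ a i) ∧ (∀ i, ω.1.2 i ≤ b i)} ↔
      (blk 1 2 5 4 u ≤ a 0 ∧ blk 2 1 4 5 u ≤ a 1) ∧
      (blk 4 5 2 1 u ≤ b 0 ∧ blk 5 4 1 2 u ≤ b 1) := by
    intro u
    simp only [mem_preimage, mem_setOf_eq, T, Xf, Yf, Fin.forall_fin_two,
      Matrix.cons_val_zero, Matrix.cons_val_one, Matrix.head_cons]
  have hst : ∀ u : ℝ, u ∈ T ⁻¹' {ω : Om | (∀ i, ω.2.1 i ≤ a i) ∧ (∀ i, ω.2.2 i ≤ b i)} ↔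
      (blk 1 2 5 4 u ≤ a 0 ∧ blk 2 1 4 5 u ≤ a 1) ∧
      (blk 2 1 4 5 u ≤ b 0 ∧ blk 1 2 5 4 u ≤ b 1) := by
    intro u
    simp only [mem_preimage, mem_setOf_eq, T, Xf, Ysf, Fin.forall_fin_two,
      Matrix.cons_val_zero, Matrix.cons_val_one, Matrix.head_cons]
  rw [cdf_block _ 0 (1/4) 1 2 4 5 (a 0) (a 1) (b 0) (b 1) (by norm_num)
      (fun u h1 h2 => by
        rw [huns u, blk_at0 1 2 5 4 (by linarith), blk_at0 2 1 4 5 (by linarith),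
          blk_at0 4 5 2 1 (by linarith), blk_at0 5 4 1 2 (by linarith)]
        constructor
        · rintro ⟨⟨k1, k2⟩, k3, k4⟩; exact ⟨by linarith, by linarith, by linarith, by linarith⟩
        · rintro ⟨k1, k2, k3, k4⟩; exact ⟨⟨by linarith, by linarith⟩, by linarith, by linarith⟩),
    cdf_block _ (1/4) (1/2) 2 1 5 4 (a 0) (a 1) (b 0) (b 1) (by norm_num)
      (fun u h1 h2 => by
        rw [huns u, blk_at1 1 2 5 4 h1 (by linarith), blk_at1 2 1 4 5 h1 (by linarith),
          blk_at1 4 5 2 1 h1 (by linarith), blk_at1 5 4 1 2 h1 (by linarith)]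
        constructor
        · rintro ⟨⟨k1, k2⟩, k3, k4⟩; exact ⟨by linarith, by linarith, by linarith, by linarith⟩
        · rintro ⟨k1, k2, k3, k4⟩; exact ⟨⟨by linarith, by linarith⟩, by linarith, by linarith⟩),
    cdf_block _ (1/2) (3/4) 5 4 2 1 (a 0) (a 1) (b 0) (b 1) (by norm_num)
      (fun u h1 h2 => by
        rw [huns u, blk_at2 1 2 5 4 h1 (by linarith), blk_at2 2 1 4 5 h1 (by linarith),
          blk_at2 4 5 2 1 h1 (by linarith), blk_at2 5 4 1 2 h1 (by linarith)]
        constructor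
        · rintro ⟨⟨k1, k2⟩, k3, k4⟩; exact ⟨by linarith, by linarith, by linarith, by linarith⟩
        · rintro ⟨k1, k2, k3, k4⟩; exact ⟨⟨by linarith, by linarith⟩, by linarith, by linarith⟩),
    cdf_block _ (3/4) 1 4 5 1 2 (a 0) (a 1) (b 0) (b 1) (by norm_num)
      (fun u h1 h2 => by
        rw [huns u, blk_at3 1 2 5 4 h1, blk_at3 2 1 4 5 h1,
          blk_at3 4 5 2 1 h1, blk_at3 5 4 1 2 h1]
        constructor
        · rintro ⟨⟨k1, k2⟩, k3, k4⟩; exact ⟨by linarith, by linarith, by linarith, by linarith⟩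
        · rintro ⟨k1, k2, k3, k4⟩; exact ⟨⟨by linarith, by linarith⟩, by linarith, by linarith⟩),
    cdf_block _ 0 (1/4) 1 2 2 1 (a 0) (a 1) (b 0) (b 1) (by norm_num)
      (fun u h1 h2 => by
        rw [hst u, blk_at0 1 2 5 4 (by linarith), blk_at0 2 1 4 5 (by linarith)]
        constructor
        · rintro ⟨⟨k1, k2⟩, k3, k4⟩; exact ⟨by linarith, by linarith, by linarith, by linarith⟩
        · rintro ⟨k1, k2, k3, k4⟩; exact ⟨⟨by linarith, by linarith⟩, by linarith, by linarith⟩),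
    cdf_block _ (1/4) (1/2) 2 1 1 2 (a 0) (a 1) (b 0) (b 1) (by norm_num)
      (fun u h1 h2 => by
        rw [hst u, blk_at1 1 2 5 4 h1 (by linarith), blk_at1 2 1 4 5 h1 (by linarith)]
        constructor
        · rintro ⟨⟨k1, k2⟩, k3, k4⟩; exact ⟨by linarith, by linarith, by linarith, by linarith⟩
        · rintro ⟨k1, k2, k3, k4⟩; exact ⟨⟨by linarith, by linarith⟩, by linarith, by linarith⟩),
    cdf_block _ (1/2) (3/4) 5 4 4 5 (a 0) (a 1) (b 0) (b 1) (by norm_num)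
      (fun u h1 h2 => by
        rw [hst u, blk_at2 1 2 5 4 h1 (by linarith), blk_at2 2 1 4 5 h1 (by linarith)]
        constructor
        · rintro ⟨⟨k1, k2⟩, k3, k4⟩; exact ⟨by linarith, by linarith, by linarith, by linarith⟩
        · rintro ⟨k1, k2, k3, k4⟩; exact ⟨⟨by linarith, by linarith⟩, by linarith, by linarith⟩),
    cdf_block _ (3/4) 1 4 5 5 4 (a 0) (a 1) (b 0) (b 1) (by norm_num)
      (fun u h1 h2 => by
        rw [hst u, blk_at3 1 2 5 4 h1, blk_at3 2 1 4 5 h1]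
        constructor
        · rintro ⟨⟨k1, k2⟩, k3, k4⟩; exact ⟨by linarith, by linarith, by linarith, by linarith⟩
        · rintro ⟨k1, k2, k3, k4⟩; exact ⟨⟨by linarith, by linarith⟩, by linarith, by linarith⟩)]
  -- now a pure ENNReal inequality between eight ofReal terms
  have pair02 : ENNReal.ofReal (min (1/4) (min (min (a 0 - 1) (a 1 - 2)) (min (b 0 - 4) (b 1 - 5)))) +
      ENNReal.ofReal (min (1/4) (min (min (a 0 - 5) (a 1 - 4)) (min (b 0 - 2) (b 1 - 1)))) ≤
      ENNReal.ofReal (min (1/4) (min (min (a 0 - 1) (a 1 - 2)) (min (b 0 - 2) (b 1 - 1)))) +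
      ENNReal.ofReal (min (1/4) (min (min (a 0 - 5) (a 1 - 4)) (min (b 0 - 4) (b 1 - 5)))) := by
    refine key_pair _ _ _ _ _ ?_ ?_ ?_
    · refine le_min4 ?_ ?_ ?_ ?_
      · exact (min_le_right _ _).trans (min4_le₁ _ _ _ _)
      · exact (min_le_right _ _).trans (min4_le₂ _ _ _ _)
      · exact (min_le_left _ _).trans (min4_le₃ _ _ _ _)
      · exact (min_le_left _ _).trans (min4_le₄ _ _ _ _)
    · exact min4_mono (by linarith) (by linarith) (by linarith) (by linarith)
    · exact min4_mono (by linarith) (by linarith) (by linarith) (by linarith)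
  have pair13 : ENNReal.ofReal (min (1/4) (min (min (a 0 - 2) (a 1 - 1)) (min (b 0 - 5) (b 1 - 4)))) +
      ENNReal.ofReal (min (1/4) (min (min (a 0 - 4) (a 1 - 5)) (min (b 0 - 1) (b 1 - 2)))) ≤
      ENNReal.ofReal (min (1/4) (min (min (a 0 - 2) (a 1 - 1)) (min (b 0 - 1) (b 1 - 2)))) +
      ENNReal.ofReal (min (1/4) (min (min (a 0 - 4) (a 1 - 5)) (min (b 0 - 5) (b 1 - 4)))) := by
    refine key_pair _ _ _ _ _ ?_ ?_ ?_
    · refine le_min4 ?_ ?_ ?_ ?_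
      · exact (min_le_right _ _).trans (min4_le₁ _ _ _ _)
      · exact (min_le_right _ _).trans (min4_le₂ _ _ _ _)
      · exact (min_le_left _ _).trans (min4_le₃ _ _ _ _)
      · exact (min_le_left _ _).trans (min4_le₄ _ _ _ _)
    · exact min4_mono (by linarith) (by linarith) (by linarith) (by linarith)
    · exact min4_mono (by linarith) (by linarith) (by linarith) (by linarith)
  calc _ = (ENNReal.ofReal (min (1/4) (min (min (a 0 - 1) (a 1 - 2)) (min (b 0 - 4) (b 1 - 5)))) +
        ENNReal.ofReal (min (1/4) (min (min (a 0 - 5) (a 1 - 4)) (min (b 0 - 2) (b 1 - 1))))) +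
        (ENNReal.ofReal (min (1/4) (min (min (a 0 - 2) (a 1 - 1)) (min (b 0 - 5) (b 1 - 4)))) +
        ENNReal.ofReal (min (1/4) (min (min (a 0 - 4) (a 1 - 5)) (min (b 0 - 1) (b 1 - 2))))) := by
        abel
    _ ≤ (ENNReal.ofReal (min (1/4) (min (min (a 0 - 1) (a 1 - 2)) (min (b 0 - 2) (b 1 - 1)))) +
        ENNReal.ofReal (min (1/4) (min (min (a 0 - 5) (a 1 - 4)) (min (b 0 - 4) (b 1 - 5))))) +
        (ENNReal.ofReal (min (1/4) (min (min (a 0 - 2) (a 1 - 1)) (min (b 0 - 1) (b 1 - 2)))) +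
        ENNReal.ofReal (min (1/4) (min (min (a 0 - 4) (a 1 - 5)) (min (b 0 - 5) (b 1 - 4))))) :=
        add_le_add pair02 pair13
    _ = _ := by abel


lemma conc_surv (a b : Fin 2 → ℝ) :
    Pm {ω : Om | (∀ i, a i ≤ ω.1.1 i) ∧ (∀ i, b i ≤ ω.1.2 i)} ≤
      Pm {ω : Om | (∀ i, a i ≤ ω.2.1 i) ∧ (∀ i, b i ≤ ω.2.2 i)} := by
  have hS1 := measSURV _ _ hX_meas hY_meas a b
  have hS2 := measSURV _ _ hXs_meas hYs_meas a b
  rw [P_apply _ hS1, P_apply _ hS2, vol_split _ (T_meas hS1), vol_split _ (T_meas hS2)]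
  have huns : ∀ u : ℝ, u ∈ T ⁻¹' {ω : Om | (∀ i, a i ≤ ω.1.1 i) ∧ (∀ i, b i ≤ ω.1.2 i)} ↔
      (a 0 ≤ blk 1 2 5 4 u ∧ a 1 ≤ blk 2 1 4 5 u) ∧
      (b 0 ≤ blk 4 5 2 1 u ∧ b 1 ≤ blk 5 4 1 2 u) := by
    intro u
    simp only [mem_preimage, mem_setOf_eq, T, Xf, Yf, Fin.forall_fin_two,
      Matrix.cons_val_zero, Matrix.cons_val_one, Matrix.head_cons]
  have hst : ∀ u : ℝ, u ∈ T ⁻¹' {ω : Om | (∀ i, a i ≤ ω.2.1 i) ∧ (∀ i, b i ≤ ω.2.2 i)} ↔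
      (a 0 ≤ blk 1 2 5 4 u ∧ a 1 ≤ blk 2 1 4 5 u) ∧
      (b 0 ≤ blk 2 1 4 5 u ∧ b 1 ≤ blk 1 2 5 4 u) := by
    intro u
    simp only [mem_preimage, mem_setOf_eq, T, Xf, Ysf, Fin.forall_fin_two,
      Matrix.cons_val_zero, Matrix.cons_val_one, Matrix.head_cons]
  rw [surv_block _ 0 (1/4) 1 2 4 5 (a 0) (a 1) (b 0) (b 1) (by norm_num)
      (fun u h1 h2 => by
        rw [huns u, blk_at0 1 2 5 4 (by linarith), blk_at0 2 1 4 5 (by linarith),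
          blk_at0 4 5 2 1 (by linarith), blk_at0 5 4 1 2 (by linarith)]
        constructor
        · rintro ⟨⟨k1, k2⟩, k3, k4⟩; exact ⟨by linarith, by linarith, by linarith, by linarith⟩
        · rintro ⟨k1, k2, k3, k4⟩; exact ⟨⟨by linarith, by linarith⟩, by linarith, by linarith⟩),
    surv_block _ (1/4) (1/2) 2 1 5 4 (a 0) (a 1) (b 0) (b 1) (by norm_num)
      (fun u h1 h2 => by
        rw [huns u, blk_at1 1 2 5 4 h1 (by linarith), blk_at1 2 1 4 5 h1 (by linarith),
          blk_at1 4 5 2 1 h1 (by linarith), blk_at1 5 4 1 2 h1 (by linarith)]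
        constructor
        · rintro ⟨⟨k1, k2⟩, k3, k4⟩; exact ⟨by linarith, by linarith, by linarith, by linarith⟩
        · rintro ⟨k1, k2, k3, k4⟩; exact ⟨⟨by linarith, by linarith⟩, by linarith, by linarith⟩),
    surv_block _ (1/2) (3/4) 5 4 2 1 (a 0) (a 1) (b 0) (b 1) (by norm_num)
      (fun u h1 h2 => by
        rw [huns u, blk_at2 1 2 5 4 h1 (by linarith), blk_at2 2 1 4 5 h1 (by linarith),
          blk_at2 4 5 2 1 h1 (by linarith), blk_at2 5 4 1 2 h1 (by linarith)]
        constructor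
        · rintro ⟨⟨k1, k2⟩, k3, k4⟩; exact ⟨by linarith, by linarith, by linarith, by linarith⟩
        · rintro ⟨k1, k2, k3, k4⟩; exact ⟨⟨by linarith, by linarith⟩, by linarith, by linarith⟩),
    surv_block _ (3/4) 1 4 5 1 2 (a 0) (a 1) (b 0) (b 1) (by norm_num)
      (fun u h1 h2 => by
        rw [huns u, blk_at3 1 2 5 4 h1, blk_at3 2 1 4 5 h1,
          blk_at3 4 5 2 1 h1, blk_at3 5 4 1 2 h1]
        constructor
        · rintro ⟨⟨k1, k2⟩, k3, k4⟩; exact ⟨by linarith, by linarith, by linarith, by linarith⟩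
        · rintro ⟨k1, k2, k3, k4⟩; exact ⟨⟨by linarith, by linarith⟩, by linarith, by linarith⟩),
    surv_block _ 0 (1/4) 1 2 2 1 (a 0) (a 1) (b 0) (b 1) (by norm_num)
      (fun u h1 h2 => by
        rw [hst u, blk_at0 1 2 5 4 (by linarith), blk_at0 2 1 4 5 (by linarith)]
        constructor
        · rintro ⟨⟨k1, k2⟩, k3, k4⟩; exact ⟨by linarith, by linarith, by linarith, by linarith⟩
        · rintro ⟨k1, k2, k3, k4⟩; exact ⟨⟨by linarith, by linarith⟩, by linarith, by linarith⟩),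
    surv_block _ (1/4) (1/2) 2 1 1 2 (a 0) (a 1) (b 0) (b 1) (by norm_num)
      (fun u h1 h2 => by
        rw [hst u, blk_at1 1 2 5 4 h1 (by linarith), blk_at1 2 1 4 5 h1 (by linarith)]
        constructor
        · rintro ⟨⟨k1, k2⟩, k3, k4⟩; exact ⟨by linarith, by linarith, by linarith, by linarith⟩
        · rintro ⟨k1, k2, k3, k4⟩; exact ⟨⟨by linarith, by linarith⟩, by linarith, by linarith⟩),
    surv_block _ (1/2) (3/4) 5 4 4 5 (a 0) (a 1) (b 0) (b 1) (by norm_num)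
      (fun u h1 h2 => by
        rw [hst u, blk_at2 1 2 5 4 h1 (by linarith), blk_at2 2 1 4 5 h1 (by linarith)]
        constructor
        · rintro ⟨⟨k1, k2⟩, k3, k4⟩; exact ⟨by linarith, by linarith, by linarith, by linarith⟩
        · rintro ⟨k1, k2, k3, k4⟩; exact ⟨⟨by linarith, by linarith⟩, by linarith, by linarith⟩),
    surv_block _ (3/4) 1 4 5 5 4 (a 0) (a 1) (b 0) (b 1) (by norm_num)
      (fun u h1 h2 => by
        rw [hst u, blk_at3 1 2 5 4 h1, blk_at3 2 1 4 5 h1]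
        constructor
        · rintro ⟨⟨k1, k2⟩, k3, k4⟩; exact ⟨by linarith, by linarith, by linarith, by linarith⟩
        · rintro ⟨k1, k2, k3, k4⟩; exact ⟨⟨by linarith, by linarith⟩, by linarith, by linarith⟩)]
  have pair02 : ENNReal.ofReal (min (1/4) (min (min (1 + 1/4 - a 0) (2 + 1/4 - a 1)) (min (4 + 1/4 - b 0) (5 + 1/4 - b 1)))) +
      ENNReal.ofReal (min (1/4) (min (min (5 + 1/4 - a 0) (4 + 1/4 - a 1)) (min (2 + 1/4 - b 0) (1 + 1/4 - b 1)))) ≤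
      ENNReal.ofReal (min (1/4) (min (min (5 + 1/4 - a 0) (4 + 1/4 - a 1)) (min (4 + 1/4 - b 0) (5 + 1/4 - b 1)))) +
      ENNReal.ofReal (min (1/4) (min (min (1 + 1/4 - a 0) (2 + 1/4 - a 1)) (min (2 + 1/4 - b 0) (1 + 1/4 - b 1)))) := by
    refine key_pair _ _ _ _ _ ?_ ?_ ?_
    · refine le_min4 ?_ ?_ ?_ ?_
      · exact (min_le_left _ _).trans (min4_le₁ _ _ _ _)
      · exact (min_le_left _ _).trans (min4_le₂ _ _ _ _)
      · exact (min_le_right _ _).trans (min4_le₃ _ _ _ _)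
      · exact (min_le_right _ _).trans (min4_le₄ _ _ _ _)
    · exact min4_mono (by linarith) (by linarith) (by linarith) (by linarith)
    · exact min4_mono (by linarith) (by linarith) (by linarith) (by linarith)
  have pair13 : ENNReal.ofReal (min (1/4) (min (min (2 + 1/4 - a 0) (1 + 1/4 - a 1)) (min (5 + 1/4 - b 0) (4 + 1/4 - b 1)))) +
      ENNReal.ofReal (min (1/4) (min (min (4 + 1/4 - a 0) (5 + 1/4 - a 1)) (min (1 + 1/4 - b 0) (2 + 1/4 - b 1)))) ≤
      ENNReal.ofReal (min (1/4) (min (min (4 + 1/4 - a 0) (5 + 1/4 - a 1)) (min (5 + 1/4 - b 0) (4 + 1/4 - b 1)))) +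
      ENNReal.ofReal (min (1/4) (min (min (2 + 1/4 - a 0) (1 + 1/4 - a 1)) (min (1 + 1/4 - b 0) (2 + 1/4 - b 1)))) := by
    refine key_pair _ _ _ _ _ ?_ ?_ ?_
    · refine le_min4 ?_ ?_ ?_ ?_
      · exact (min_le_left _ _).trans (min4_le₁ _ _ _ _)
      · exact (min_le_left _ _).trans (min4_le₂ _ _ _ _)
      · exact (min_le_right _ _).trans (min4_le₃ _ _ _ _)
      · exact (min_le_right _ _).trans (min4_le₄ _ _ _ _)
    · exact min4_mono (by linarith) (by linarith) (by linarith) (by linarith)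
    · exact min4_mono (by linarith) (by linarith) (by linarith) (by linarith)
  calc _ = (ENNReal.ofReal (min (1/4) (min (min (1 + 1/4 - a 0) (2 + 1/4 - a 1)) (min (4 + 1/4 - b 0) (5 + 1/4 - b 1)))) +
        ENNReal.ofReal (min (1/4) (min (min (5 + 1/4 - a 0) (4 + 1/4 - a 1)) (min (2 + 1/4 - b 0) (1 + 1/4 - b 1))))) +
        (ENNReal.ofReal (min (1/4) (min (min (2 + 1/4 - a 0) (1 + 1/4 - a 1)) (min (5 + 1/4 - b 0) (4 + 1/4 - b 1)))) +
        ENNReal.ofReal (min (1/4) (min (min (4 + 1/4 - a 0) (5 + 1/4 - a 1)) (min (1 + 1/4 - b 0) (2 + 1/4 - b 1))))) := by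
        abel
    _ ≤ (ENNReal.ofReal (min (1/4) (min (min (5 + 1/4 - a 0) (4 + 1/4 - a 1)) (min (4 + 1/4 - b 0) (5 + 1/4 - b 1)))) +
        ENNReal.ofReal (min (1/4) (min (min (1 + 1/4 - a 0) (2 + 1/4 - a 1)) (min (2 + 1/4 - b 0) (1 + 1/4 - b 1))))) +
        (ENNReal.ofReal (min (1/4) (min (min (4 + 1/4 - a 0) (5 + 1/4 - a 1)) (min (5 + 1/4 - b 0) (4 + 1/4 - b 1)))) +
        ENNReal.ofReal (min (1/4) (min (min (2 + 1/4 - a 0) (1 + 1/4 - a 1)) (min (1 + 1/4 - b 0) (2 + 1/4 - b 1))))) :=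
        add_le_add pair02 pair13
    _ = _ := by abel


lemma perm_cases : ∀ π : Equiv.Perm (Fin 2), π = 1 ∨ π = Equiv.swap 0 1 := by decide

lemma pat_of_le (Pat : (Fin 2 → ℝ) → Equiv.Perm (Fin 2)) (hPat : ∀ x, IsOrdPattern x (Pat x))
    {x : Fin 2 → ℝ} (h : x 0 ≤ x 1) : Pat x = 1 := by
  rcases perm_cases (Pat x) with h' | h'
  · exact h'
  · exfalso
    have hlt : Pat x 0 < Pat x 1 := by
      rw [hPat x 0 1]
      rcases lt_or_eq_of_le h with h'' | h''
      · exact Or.inl h''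
      · exact Or.inr ⟨h'', by decide⟩
    rw [h'] at hlt
    exact absurd hlt (by decide)

lemma pat_of_gt (Pat : (Fin 2 → ℝ) → Equiv.Perm (Fin 2)) (hPat : ∀ x, IsOrdPattern x (Pat x))
    {x : Fin 2 → ℝ} (h : x 1 < x 0) : Pat x = Equiv.swap 0 1 := by
  rcases perm_cases (Pat x) with h' | h'
  · exfalso
    have hlt : Pat x 0 < Pat x 1 := by rw [h']; decide
    rcases (hPat x 0 1).1 hlt with h'' | ⟨h'', _⟩
    · linarith
    · linarith
  · exact h'

lemma swap_ne_one : Equiv.swap (0 : Fin 2) 1 ≠ 1 := by decide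

section PatSets

variable (Pat : (Fin 2 → ℝ) → Equiv.Perm (Fin 2))

lemma set_pat_one (hPat : ∀ x, IsOrdPattern x (Pat x)) (f : Om → Fin 2 → ℝ) :
    {ω : Om | Pat (f ω) = 1} = {ω : Om | f ω 0 ≤ f ω 1} := by
  ext ω
  simp only [mem_setOf_eq]
  constructor
  · intro h
    by_contra hc
    push_neg at hc
    rw [pat_of_gt Pat hPat hc] at h
    exact swap_ne_one h
  · exact fun h => pat_of_le Pat hPat h

lemma set_pat_swap (hPat : ∀ x, IsOrdPattern x (Pat x)) (f : Om → Fin 2 → ℝ) :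
    {ω : Om | Pat (f ω) = Equiv.swap 0 1} = {ω : Om | f ω 1 < f ω 0} := by
  ext ω
  simp only [mem_setOf_eq]
  constructor
  · intro h
    by_contra hc
    push_neg at hc
    rw [pat_of_le Pat hPat hc] at h
    exact swap_ne_one h.symm
  · exact fun h => pat_of_gt Pat hPat h

lemma set_pat_match (hPat : ∀ x, IsOrdPattern x (Pat x)) (f g : Om → Fin 2 → ℝ) :
    {ω : Om | Pat (f ω) = Pat (g ω)} =
      ({ω : Om | f ω 0 ≤ f ω 1} ∩ {ω : Om | g ω 0 ≤ g ω 1}) ∪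
      ({ω : Om | f ω 0 ≤ f ω 1}ᶜ ∩ {ω : Om | g ω 0 ≤ g ω 1}ᶜ) := by
  ext ω
  simp only [mem_setOf_eq, mem_union, mem_inter_iff, mem_compl_iff, mem_setOf_eq]
  by_cases h1 : f ω 0 ≤ f ω 1 <;> by_cases h2 : g ω 0 ≤ g ω 1
  · simp [h1, h2, pat_of_le Pat hPat h1, pat_of_le Pat hPat h2]
  · push_neg at h2
    simp [h1, h2.not_ge, pat_of_le Pat hPat h1, pat_of_gt Pat hPat h2,
      (Ne.symm swap_ne_one : (1 : Equiv.Perm (Fin 2)) ≠ Equiv.swap 0 1)]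
  · push_neg at h1
    simp [h1.not_ge, h2, pat_of_gt Pat hPat h1, pat_of_le Pat hPat h2, swap_ne_one]
  · push_neg at h1; push_neg at h2
    simp [h1.not_ge, h2.not_ge, pat_of_gt Pat hPat h1, pat_of_gt Pat hPat h2]

end PatSets

lemma up_X : ∀ u : ℝ, 0 ≤ u → u < 1 →
    ((blk 1 2 5 4 u ≤ blk 2 1 4 5 u) ↔ (u < 1/4 ∨ 3/4 ≤ u)) := by
  intro u h0 h1
  constructor
  · intro hle
    rcases lt_or_ge u (1/4) with h | h
    · exact Or.inl h
    rcases lt_or_ge u (1/2) with h' | h'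
    · rw [blk_at1 1 2 5 4 h h', blk_at1 2 1 4 5 h h'] at hle; linarith
    rcases lt_or_ge u (3/4) with h'' | h''
    · rw [blk_at2 1 2 5 4 h' h'', blk_at2 2 1 4 5 h' h''] at hle; linarith
    · exact Or.inr h''
  · rintro (h | h)
    · rw [blk_at0 1 2 5 4 h, blk_at0 2 1 4 5 h]; linarith
    · rw [blk_at3 1 2 5 4 h, blk_at3 2 1 4 5 h]; linarith

lemma up_Y : ∀ u : ℝ, 0 ≤ u → u < 1 →
    ((blk 4 5 2 1 u ≤ blk 5 4 1 2 u) ↔ (u < 1/4 ∨ 3/4 ≤ u)) := by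
  intro u h0 h1
  constructor
  · intro hle
    rcases lt_or_ge u (1/4) with h | h
    · exact Or.inl h
    rcases lt_or_ge u (1/2) with h' | h'
    · rw [blk_at1 4 5 2 1 h h', blk_at1 5 4 1 2 h h'] at hle; linarith
    rcases lt_or_ge u (3/4) with h'' | h''
    · rw [blk_at2 4 5 2 1 h' h'', blk_at2 5 4 1 2 h' h''] at hle; linarith
    · exact Or.inr h''
  · rintro (h | h)
    · rw [blk_at0 4 5 2 1 h, blk_at0 5 4 1 2 h]; linarith
    · rw [blk_at3 4 5 2 1 h, blk_at3 5 4 1 2 h]; linarith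

lemma up_Ys : ∀ u : ℝ, 0 ≤ u → u < 1 →
    ((blk 2 1 4 5 u ≤ blk 1 2 5 4 u) ↔ ¬(u < 1/4 ∨ 3/4 ≤ u)) := by
  intro u h0 h1
  push_neg
  constructor
  · intro hle
    constructor
    · by_contra h
      push_neg at h
      rw [blk_at0 2 1 4 5 h, blk_at0 1 2 5 4 h] at hle; linarith
    · by_contra h
      push_neg at h
      rw [blk_at3 2 1 4 5 h, blk_at3 1 2 5 4 h] at hle
      linarith
  · rintro ⟨h, h'⟩
    rcases lt_or_ge u (1/2) with hh | hh
    · rw [blk_at1 2 1 4 5 h hh, blk_at1 1 2 5 4 h hh]; linarith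
    · rw [blk_at2 2 1 4 5 hh (by linarith), blk_at2 1 2 5 4 hh (by linarith)]; linarith

lemma vol_up : volume ({u : ℝ | u < 1/4 ∨ 3/4 ≤ u} ∩ Ico (0:ℝ) 1) = ENNReal.ofReal (1/2) := by
  have hset : {u : ℝ | u < 1/4 ∨ 3/4 ≤ u} ∩ Ico (0:ℝ) 1 = Ico (0:ℝ) (1/4) ∪ Ico (3/4:ℝ) 1 := by
    ext u
    simp only [mem_inter_iff, mem_setOf_eq, mem_union, mem_Ico]
    constructor
    · rintro ⟨h | h, h0, h1⟩
      · exact Or.inl ⟨h0, h⟩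
      · exact Or.inr ⟨h, h1⟩
    · rintro (⟨h0, h⟩ | ⟨h, h1⟩)
      · exact ⟨Or.inl h, h0, by linarith⟩
      · exact ⟨Or.inr h, by linarith, h1⟩
  rw [hset, measure_union (Set.Ico_disjoint_Ico.2 (by norm_num)) measurableSet_Ico,
    Real.volume_Ico, Real.volume_Ico, ← ENNReal.ofReal_add (by norm_num) (by norm_num)]
  norm_num

lemma vol_down : volume ({u : ℝ | ¬(u < 1/4 ∨ 3/4 ≤ u)} ∩ Ico (0:ℝ) 1) = ENNReal.ofReal (1/2) := by
  have hset : {u : ℝ | ¬(u < 1/4 ∨ 3/4 ≤ u)} ∩ Ico (0:ℝ) 1 = Ico (1/4:ℝ) (3/4) := by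
    ext u
    simp only [mem_inter_iff, mem_setOf_eq, mem_Ico, not_or, not_lt]
    constructor
    · rintro ⟨⟨h, h'⟩, h0, h1⟩; exact ⟨h, by linarith⟩
    · rintro ⟨h, h'⟩; exact ⟨⟨h, by linarith⟩, by linarith, by linarith⟩
  rw [hset, Real.volume_Ico]
  norm_num

lemma mle_X : MeasurableSet {ω : Om | ω.1.1 0 ≤ ω.1.1 1} :=
  measurableSet_le ((measurable_pi_apply 0).comp hX_meas) ((measurable_pi_apply 1).comp hX_meas)
lemma mle_Y : MeasurableSet {ω : Om | ω.1.2 0 ≤ ω.1.2 1} :=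
  measurableSet_le ((measurable_pi_apply 0).comp hY_meas) ((measurable_pi_apply 1).comp hY_meas)
lemma mle_Xs : MeasurableSet {ω : Om | ω.2.1 0 ≤ ω.2.1 1} :=
  measurableSet_le ((measurable_pi_apply 0).comp hXs_meas) ((measurable_pi_apply 1).comp hXs_meas)
lemma mle_Ys : MeasurableSet {ω : Om | ω.2.2 0 ≤ ω.2.2 1} :=
  measurableSet_le ((measurable_pi_apply 0).comp hYs_meas) ((measurable_pi_apply 1).comp hYs_meas)

lemma PmX_le : Pm {ω : Om | ω.1.1 0 ≤ ω.1.1 1} = ENNReal.ofReal (1/2) := by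
  rw [P_apply _ mle_X]
  have hset : T ⁻¹' {ω : Om | ω.1.1 0 ≤ ω.1.1 1} ∩ Set.Ico (0:ℝ) 1 =
      {u : ℝ | u < 1/4 ∨ 3/4 ≤ u} ∩ Set.Ico (0:ℝ) 1 := by
    ext u
    simp only [Set.mem_inter_iff, Set.mem_preimage, Set.mem_setOf_eq, Set.mem_Ico, T, Xf,
      Matrix.cons_val_zero, Matrix.cons_val_one, Matrix.head_cons]
    constructor
    · rintro ⟨h, h0, h1⟩; exact ⟨(up_X u h0 h1).1 h, h0, h1⟩
    · rintro ⟨h, h0, h1⟩; exact ⟨(up_X u h0 h1).2 h, h0, h1⟩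
  rw [hset, vol_up]

lemma PmX_lt : Pm {ω : Om | ω.1.1 1 < ω.1.1 0} = ENNReal.ofReal (1/2) := by
  rw [P_apply _ (show MeasurableSet {ω : Om | ω.1.1 1 < ω.1.1 0} from
    measurableSet_lt ((measurable_pi_apply 1).comp hX_meas) ((measurable_pi_apply 0).comp hX_meas))]
  have hset : T ⁻¹' {ω : Om | ω.1.1 1 < ω.1.1 0} ∩ Set.Ico (0:ℝ) 1 =
      {u : ℝ | ¬(u < 1/4 ∨ 3/4 ≤ u)} ∩ Set.Ico (0:ℝ) 1 := by
    ext u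
    simp only [Set.mem_inter_iff, Set.mem_preimage, Set.mem_setOf_eq, Set.mem_Ico, T, Xf,
      Matrix.cons_val_zero, Matrix.cons_val_one, Matrix.head_cons]
    constructor
    · rintro ⟨h, h0, h1⟩
      exact ⟨fun hc => not_le.2 h ((up_X u h0 h1).2 hc), h0, h1⟩
    · rintro ⟨h, h0, h1⟩
      exact ⟨not_le.1 (fun hc => h ((up_X u h0 h1).1 hc)), h0, h1⟩
  rw [hset, vol_down]

lemma PmXs_le : Pm {ω : Om | ω.2.1 0 ≤ ω.2.1 1} = ENNReal.ofReal (1/2) := by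
  rw [P_apply _ mle_Xs]
  have hset : T ⁻¹' {ω : Om | ω.2.1 0 ≤ ω.2.1 1} ∩ Set.Ico (0:ℝ) 1 =
      {u : ℝ | u < 1/4 ∨ 3/4 ≤ u} ∩ Set.Ico (0:ℝ) 1 := by
    ext u
    simp only [Set.mem_inter_iff, Set.mem_preimage, Set.mem_setOf_eq, Set.mem_Ico, T, Xf,
      Matrix.cons_val_zero, Matrix.cons_val_one, Matrix.head_cons]
    constructor
    · rintro ⟨h, h0, h1⟩; exact ⟨(up_X u h0 h1).1 h, h0, h1⟩
    · rintro ⟨h, h0, h1⟩; exact ⟨(up_X u h0 h1).2 h, h0, h1⟩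
  rw [hset, vol_up]

lemma PmXs_lt : Pm {ω : Om | ω.2.1 1 < ω.2.1 0} = ENNReal.ofReal (1/2) := by
  rw [P_apply _ (show MeasurableSet {ω : Om | ω.2.1 1 < ω.2.1 0} from
    measurableSet_lt ((measurable_pi_apply 1).comp hXs_meas) ((measurable_pi_apply 0).comp hXs_meas))]
  have hset : T ⁻¹' {ω : Om | ω.2.1 1 < ω.2.1 0} ∩ Set.Ico (0:ℝ) 1 =
      {u : ℝ | ¬(u < 1/4 ∨ 3/4 ≤ u)} ∩ Set.Ico (0:ℝ) 1 := by
    ext u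
    simp only [Set.mem_inter_iff, Set.mem_preimage, Set.mem_setOf_eq, Set.mem_Ico, T, Xf,
      Matrix.cons_val_zero, Matrix.cons_val_one, Matrix.head_cons]
    constructor
    · rintro ⟨h, h0, h1⟩
      exact ⟨fun hc => not_le.2 h ((up_X u h0 h1).2 hc), h0, h1⟩
    · rintro ⟨h, h0, h1⟩
      exact ⟨not_le.1 (fun hc => h ((up_X u h0 h1).1 hc)), h0, h1⟩
  rw [hset, vol_down]

lemma PmY_le : Pm {ω : Om | ω.1.2 0 ≤ ω.1.2 1} = ENNReal.ofReal (1/2) := by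
  rw [P_apply _ mle_Y]
  have hset : T ⁻¹' {ω : Om | ω.1.2 0 ≤ ω.1.2 1} ∩ Set.Ico (0:ℝ) 1 =
      {u : ℝ | u < 1/4 ∨ 3/4 ≤ u} ∩ Set.Ico (0:ℝ) 1 := by
    ext u
    simp only [Set.mem_inter_iff, Set.mem_preimage, Set.mem_setOf_eq, Set.mem_Ico, T, Yf,
      Matrix.cons_val_zero, Matrix.cons_val_one, Matrix.head_cons]
    constructor
    · rintro ⟨h, h0, h1⟩; exact ⟨(up_Y u h0 h1).1 h, h0, h1⟩
    · rintro ⟨h, h0, h1⟩; exact ⟨(up_Y u h0 h1).2 h, h0, h1⟩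
  rw [hset, vol_up]

lemma PmY_lt : Pm {ω : Om | ω.1.2 1 < ω.1.2 0} = ENNReal.ofReal (1/2) := by
  rw [P_apply _ (show MeasurableSet {ω : Om | ω.1.2 1 < ω.1.2 0} from
    measurableSet_lt ((measurable_pi_apply 1).comp hY_meas) ((measurable_pi_apply 0).comp hY_meas))]
  have hset : T ⁻¹' {ω : Om | ω.1.2 1 < ω.1.2 0} ∩ Set.Ico (0:ℝ) 1 =
      {u : ℝ | ¬(u < 1/4 ∨ 3/4 ≤ u)} ∩ Set.Ico (0:ℝ) 1 := by
    ext u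
    simp only [Set.mem_inter_iff, Set.mem_preimage, Set.mem_setOf_eq, Set.mem_Ico, T, Yf,
      Matrix.cons_val_zero, Matrix.cons_val_one, Matrix.head_cons]
    constructor
    · rintro ⟨h, h0, h1⟩
      exact ⟨fun hc => not_le.2 h ((up_Y u h0 h1).2 hc), h0, h1⟩
    · rintro ⟨h, h0, h1⟩
      exact ⟨not_le.1 (fun hc => h ((up_Y u h0 h1).1 hc)), h0, h1⟩
  rw [hset, vol_down]

lemma PmYs_le : Pm {ω : Om | ω.2.2 0 ≤ ω.2.2 1} = ENNReal.ofReal (1/2) := by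
  rw [P_apply _ mle_Ys]
  have hset : T ⁻¹' {ω : Om | ω.2.2 0 ≤ ω.2.2 1} ∩ Set.Ico (0:ℝ) 1 =
      {u : ℝ | ¬(u < 1/4 ∨ 3/4 ≤ u)} ∩ Set.Ico (0:ℝ) 1 := by
    ext u
    simp only [Set.mem_inter_iff, Set.mem_preimage, Set.mem_setOf_eq, Set.mem_Ico, T, Ysf,
      Matrix.cons_val_zero, Matrix.cons_val_one, Matrix.head_cons]
    constructor
    · rintro ⟨h, h0, h1⟩; exact ⟨(up_Ys u h0 h1).1 h, h0, h1⟩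
    · rintro ⟨h, h0, h1⟩; exact ⟨(up_Ys u h0 h1).2 h, h0, h1⟩
  rw [hset, vol_down]

lemma PmYs_lt : Pm {ω : Om | ω.2.2 1 < ω.2.2 0} = ENNReal.ofReal (1/2) := by
  rw [P_apply _ (show MeasurableSet {ω : Om | ω.2.2 1 < ω.2.2 0} from
    measurableSet_lt ((measurable_pi_apply 1).comp hYs_meas) ((measurable_pi_apply 0).comp hYs_meas))]
  have hset : T ⁻¹' {ω : Om | ω.2.2 1 < ω.2.2 0} ∩ Set.Ico (0:ℝ) 1 =
      {u : ℝ | u < 1/4 ∨ 3/4 ≤ u} ∩ Set.Ico (0:ℝ) 1 := by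
    ext u
    simp only [Set.mem_inter_iff, Set.mem_preimage, Set.mem_setOf_eq, Set.mem_Ico, T, Ysf,
      Matrix.cons_val_zero, Matrix.cons_val_one, Matrix.head_cons]
    constructor
    · rintro ⟨h, h0, h1⟩
      refine ⟨?_, h0, h1⟩
      by_contra hc
      exact not_le.2 h ((up_Ys u h0 h1).2 hc)
    · rintro ⟨h, h0, h1⟩
      refine ⟨?_, h0, h1⟩
      exact not_le.1 fun hc => ((up_Ys u h0 h1).1 hc) h
  rw [hset, vol_up]

lemma Pm_match : Pm (({ω : Om | ω.1.1 0 ≤ ω.1.1 1} ∩ {ω : Om | ω.1.2 0 ≤ ω.1.2 1}) ∪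
    ({ω : Om | ω.1.1 0 ≤ ω.1.1 1}ᶜ ∩ {ω : Om | ω.1.2 0 ≤ ω.1.2 1}ᶜ)) = 1 := by
  rw [P_apply _ ((mle_X.inter mle_Y).union (mle_X.compl.inter mle_Y.compl))]
  have hsub : Set.Ico (0:ℝ) 1 ⊆ T ⁻¹' (({ω : Om | ω.1.1 0 ≤ ω.1.1 1} ∩ {ω : Om | ω.1.2 0 ≤ ω.1.2 1}) ∪
      ({ω : Om | ω.1.1 0 ≤ ω.1.1 1}ᶜ ∩ {ω : Om | ω.1.2 0 ≤ ω.1.2 1}ᶜ)) := by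
    rintro u ⟨h0, h1⟩
    simp only [Set.mem_preimage, Set.mem_union, Set.mem_inter_iff, Set.mem_compl_iff,
      Set.mem_setOf_eq, T, Xf, Yf, Matrix.cons_val_zero, Matrix.cons_val_one, Matrix.head_cons]
    by_cases h : u < 1/4 ∨ 3/4 ≤ u
    · exact Or.inl ⟨(up_X u h0 h1).2 h, (up_Y u h0 h1).2 h⟩
    · exact Or.inr ⟨fun hc => h ((up_X u h0 h1).1 hc), fun hc => h ((up_Y u h0 h1).1 hc)⟩
  rw [Set.inter_eq_right.2 hsub, Real.volume_Ico]
  norm_num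

lemma Pm_mismatch : Pm (({ω : Om | ω.2.1 0 ≤ ω.2.1 1} ∩ {ω : Om | ω.2.2 0 ≤ ω.2.2 1}) ∪
    ({ω : Om | ω.2.1 0 ≤ ω.2.1 1}ᶜ ∩ {ω : Om | ω.2.2 0 ≤ ω.2.2 1}ᶜ)) = 0 := by
  rw [P_apply _ ((mle_Xs.inter mle_Ys).union (mle_Xs.compl.inter mle_Ys.compl))]
  have hempty : T ⁻¹' (({ω : Om | ω.2.1 0 ≤ ω.2.1 1} ∩ {ω : Om | ω.2.2 0 ≤ ω.2.2 1}) ∪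
      ({ω : Om | ω.2.1 0 ≤ ω.2.1 1}ᶜ ∩ {ω : Om | ω.2.2 0 ≤ ω.2.2 1}ᶜ)) ∩ Set.Ico (0:ℝ) 1 = ∅ := by
    rw [Set.eq_empty_iff_forall_notMem]
    rintro u ⟨hm, h0, h1⟩
    simp only [Set.mem_preimage, Set.mem_union, Set.mem_inter_iff, Set.mem_compl_iff,
      Set.mem_setOf_eq, T, Xf, Ysf, Matrix.cons_val_zero, Matrix.cons_val_one,
      Matrix.head_cons] at hm
    rcases hm with ⟨hx, hy⟩ | ⟨hx, hy⟩
    · exact ((up_Ys u h0 h1).1 hy) ((up_X u h0 h1).1 hx)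
    · have hind : u < 1/4 ∨ 3/4 ≤ u := by
        by_contra hni
        exact hy ((up_Ys u h0 h1).2 hni)
      exact hx ((up_X u h0 h1).2 hind)
  rw [hempty]
  exact measure_empty

lemma opd_lt (Pat : (Fin 2 → ℝ) → Equiv.Perm (Fin 2)) (hPat : ∀ x, IsOrdPattern x (Pat x)) :
    OPD Pm Pat (fun ω : Om => ω.2.1) (fun ω : Om => ω.2.2) <
      OPD Pm Pat (fun ω : Om => ω.1.1) (fun ω : Om => ω.1.2) := by
  unfold OPD
  have huniv : (Finset.univ : Finset (Equiv.Perm (Fin 2))) = {1, Equiv.swap 0 1} := by decide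
  rw [huniv, Finset.sum_pair (Ne.symm swap_ne_one), Finset.sum_pair (Ne.symm swap_ne_one)]
  simp only [set_pat_one Pat hPat, set_pat_swap Pat hPat, set_pat_match Pat hPat]
  rw [Pm_match, Pm_mismatch, PmX_le, PmX_lt, PmXs_le, PmXs_lt, PmY_le, PmY_lt, PmYs_le, PmYs_lt]
  norm_num [ENNReal.toReal_ofReal]

lemma atomless_all (i : Fin 2) (r : ℝ) :
    Pm {ω : Om | ω.1.1 i = r} = 0 ∧ Pm {ω : Om | ω.1.2 i = r} = 0 ∧
    Pm {ω : Om | ω.2.1 i = r} = 0 ∧ Pm {ω : Om | ω.2.2 i = r} = 0 := by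
  fin_cases i
  · refine ⟨?_, ?_, ?_, ?_⟩
    · show Pm {ω : Om | ω.1.1 0 = r} = 0
      rw [P_apply _ (show MeasurableSet {ω : Om | ω.1.1 0 = r} from
        measurableSet_eq_fun ((measurable_pi_apply 0).comp hX_meas) measurable_const)]
      exact blk_atomless 1 2 5 4 r
    · show Pm {ω : Om | ω.1.2 0 = r} = 0
      rw [P_apply _ (show MeasurableSet {ω : Om | ω.1.2 0 = r} from
        measurableSet_eq_fun ((measurable_pi_apply 0).comp hY_meas) measurable_const)]
      exact blk_atomless 4 5 2 1 r
    · show Pm {ω : Om | ω.2.1 0 = r} = 0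
      rw [P_apply _ (show MeasurableSet {ω : Om | ω.2.1 0 = r} from
        measurableSet_eq_fun ((measurable_pi_apply 0).comp hXs_meas) measurable_const)]
      exact blk_atomless 1 2 5 4 r
    · show Pm {ω : Om | ω.2.2 0 = r} = 0
      rw [P_apply _ (show MeasurableSet {ω : Om | ω.2.2 0 = r} from
        measurableSet_eq_fun ((measurable_pi_apply 0).comp hYs_meas) measurable_const)]
      exact blk_atomless 2 1 4 5 r
  · refine ⟨?_, ?_, ?_, ?_⟩
    · show Pm {ω : Om | ω.1.1 1 = r} = 0
      rw [P_apply _ (show MeasurableSet {ω : Om | ω.1.1 1 = r} from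
        measurableSet_eq_fun ((measurable_pi_apply 1).comp hX_meas) measurable_const)]
      exact blk_atomless 2 1 4 5 r
    · show Pm {ω : Om | ω.1.2 1 = r} = 0
      rw [P_apply _ (show MeasurableSet {ω : Om | ω.1.2 1 = r} from
        measurableSet_eq_fun ((measurable_pi_apply 1).comp hY_meas) measurable_const)]
      exact blk_atomless 5 4 1 2 r
    · show Pm {ω : Om | ω.2.1 1 = r} = 0
      rw [P_apply _ (show MeasurableSet {ω : Om | ω.2.1 1 = r} from
        measurableSet_eq_fun ((measurable_pi_apply 1).comp hXs_meas) measurable_const)]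
      exact blk_atomless 2 1 4 5 r
    · show Pm {ω : Om | ω.2.2 1 = r} = 0
      rw [P_apply _ (show MeasurableSet {ω : Om | ω.2.2 1 = r} from
        measurableSet_eq_fun ((measurable_pi_apply 1).comp hYs_meas) measurable_const)]
      exact blk_atomless 1 2 5 4 r

end OPDAux

/-- Ordinal pattern dependence does not respect concordance ordering: there are random
vectors `(X,Y)` and `(X*,Y*)` with equal marginal distributions, stationary increments and
continuous marginals, which are ordered in concordance order, but with
`OPD₂(X,Y) > OPD₂(X*,Y*)`. -/
theorem opd_does_not_respect_concordance :
    ∃ (ℙ : Measure (((Fin 2 → ℝ) × (Fin 2 → ℝ)) × ((Fin 2 → ℝ) × (Fin 2 → ℝ))))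
      (X Y Xs Ys : ((Fin 2 → ℝ) × (Fin 2 → ℝ)) × ((Fin 2 → ℝ) × (Fin 2 → ℝ)) → Fin 2 → ℝ),
      IsProbabilityMeasure ℙ ∧
      Measurable X ∧ Measurable Y ∧ Measurable Xs ∧ Measurable Ys ∧
      -- equality in distribution
      Measure.map X ℙ = Measure.map Xs ℙ ∧
      Measure.map Y ℙ = Measure.map Ys ℙ ∧
      -- stationary marginals
      Measure.map (fun ω => X ω 0) ℙ = Measure.map (fun ω => X ω 1) ℙ ∧
      Measure.map (fun ω => Y ω 0) ℙ = Measure.map (fun ω => Y ω 1) ℙ ∧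
      -- continuous marginal distributions (no atoms)
      (∀ (i : Fin 2) (r : ℝ),
        ℙ {ω | X ω i = r} = 0 ∧ ℙ {ω | Y ω i = r} = 0 ∧
        ℙ {ω | Xs ω i = r} = 0 ∧ ℙ {ω | Ys ω i = r} = 0) ∧
      -- concordance ordering: cdf domination
      (∀ a b : Fin 2 → ℝ,
        ℙ {ω | (∀ i, X ω i ≤ a i) ∧ (∀ i, Y ω i ≤ b i)} ≤
          ℙ {ω | (∀ i, Xs ω i ≤ a i) ∧ (∀ i, Ys ω i ≤ b i)}) ∧
      -- concordance ordering: survival function domination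
      (∀ a b : Fin 2 → ℝ,
        ℙ {ω | (∀ i, a i ≤ X ω i) ∧ (∀ i, b i ≤ Y ω i)} ≤
          ℙ {ω | (∀ i, a i ≤ Xs ω i) ∧ (∀ i, b i ≤ Ys ω i)}) ∧
      -- but ordinal pattern dependence is strictly larger for (X, Y)
      (∀ Pat : (Fin 2 → ℝ) → Equiv.Perm (Fin 2), (∀ x, IsOrdPattern x (Pat x)) →
        OPD ℙ Pat Xs Ys < OPD ℙ Pat X Y) := by
  refine ⟨OPDAux.Pm, fun ω => ω.1.1, fun ω => ω.1.2, fun ω => ω.2.1, fun ω => ω.2.2,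
    inferInstance, OPDAux.hX_meas, OPDAux.hY_meas, OPDAux.hXs_meas, OPDAux.hYs_meas,
    OPDAux.eqdist_X, OPDAux.eqdist_Y, OPDAux.stat_X, OPDAux.stat_Y,
    OPDAux.atomless_all,
    fun a b => OPDAux.conc_cdf a b,
    fun a b => OPDAux.conc_surv a b,
    fun Pat hPat => OPDAux.opd_lt Pat hPat⟩
end
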